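/- arXiv:2205.12881 — 5 statements merged into one kernel-verified Lean document; each statement's English description precedes it below -/
import Mathlib

section
/- Let η be a positive finite measure on Θ with strict priorities. If the cutoff vector P ∈ [0,1]^H is η-market-clearing, then the associated interest function I^P is (η, V^det)-stable. -/
open MeasureTheory Filter
open scoped Classical ENNReal

noncomputable section

/-- A student type: a complete (linear) order on `Option H` (`none` is the outside option `∅`),
together with a priority score in `[0,1]` at each school. -/
abbrev Student (H : Type*) := LinearOrder (Option H) × (H → unitInterval)

instance (H : Type*) : MeasurableSpace (LinearOrder (Option H)) := ⊤
instance (H : Type*) : TopologicalSpace (LinearOrder (Option H)) := ⊥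

/-- `Prefers θ a b` : student `θ` strictly prefers option `a` to option `b`. -/
def Prefers {H : Type*} (θ : Student H) (a b : Option H) : Prop := θ.1.lt b a

/-- Priority of `θ` at option `h` (junk value `1` at the outside option). -/
def priOf {H : Type*} (θ : Student H) : Option H → unitInterval := fun o => o.elim 1 θ.2

abbrev MatchingFun (H : Type*) := Student H → Option H → ℝ
abbrev InterestFun (H : Type*) := H → unitInterval → ℝ
abbrev AdmissionsFun (H : Type*) := Option H → unitInterval → ℝ

section Defs
variable {H : Type*} [Fintype H]

/-- `M` maps each student to a probability distribution over `Option H`. -/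
def IsMatchingFun (M : MatchingFun H) : Prop :=
  ∀ θ : Student H, (∀ h, 0 ≤ M θ h) ∧ ∑ h : Option H, M θ h = 1

/-- Interest functions are componentwise weakly decreasing and nonnegative. -/
def IsInterestFun (I : InterestFun H) : Prop :=
  ∀ h, Antitone (I h) ∧ ∀ p, 0 ≤ I h p

/-- Admissions functions are componentwise weakly increasing with values in `[0,1]`,
and everyone is always admitted to the outside option. -/
def IsAdmissionsFun (A : AdmissionsFun H) : Prop :=
  (∀ h, Monotone (A h) ∧ ∀ p, A h p ∈ Set.Icc (0:ℝ) 1) ∧ ∀ p, A none p = 1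

/-- The interest function `𝓘(M)` of a matching `M`. -/
def interestOf (η : Measure (Student H)) (M : MatchingFun H) : InterestFun H :=
  fun h p => ∫ θ, (if p ≤ θ.2 h then (1:ℝ) else 0) *
    (1 - ∑ h' ∈ Finset.univ.filter (fun h' : Option H => Prefers θ h' (some h)), M θ h') ∂η

/-- The admissions function `𝓐(I)` of an interest function `I`, given a vacancy function `V`
and capacities `C`. -/
def admissionsOf (V : ℝ → ℕ → ℝ) (C : H → ℕ) (I : InterestFun H) : AdmissionsFun H :=
  fun h p => h.elim 1 fun h0 => V (I h0 p) (C h0)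

/-- The matching `𝓜(A)` of an admissions function `A`. -/
def matchingOf (A : AdmissionsFun H) : MatchingFun H := fun θ h =>
  A h (priOf θ h) *
    ∏ h' ∈ Finset.univ.filter (fun h' : Option H => Prefers θ h' h), (1 - A h' (priOf θ h'))

/-- A matching `M` is `(η, V)`-stable if `M = 𝓜(𝓐(𝓘(M)))`. -/
def StableMatching (η : Measure (Student H)) (V : ℝ → ℕ → ℝ) (C : H → ℕ)
    (M : MatchingFun H) : Prop :=
  IsMatchingFun M ∧ M = matchingOf (admissionsOf V C (interestOf η M))

/-- An interest function `I` is `(η, V)`-stable if `I = 𝓘(𝓜(𝓐(I)))`. -/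
def StableInterest (η : Measure (Student H)) (V : ℝ → ℕ → ℝ) (C : H → ℕ)
    (I : InterestFun H) : Prop :=
  IsInterestFun I ∧ I = interestOf η (matchingOf (admissionsOf V C I))

/-- An admissions function `A` is `(η, V)`-stable if `A = 𝓐(𝓘(𝓜(A)))`. -/
def StableAdmissions (η : Measure (Student H)) (V : ℝ → ℕ → ℝ) (C : H → ℕ)
    (A : AdmissionsFun H) : Prop :=
  IsAdmissionsFun A ∧ A = admissionsOf V C (interestOf η (matchingOf A))

/-- An outcome `(M, I, A)` is `(η, V)`-stable. -/
def StableOutcome (η : Measure (Student H)) (V : ℝ → ℕ → ℝ) (C : H → ℕ)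
    (M : MatchingFun H) (I : InterestFun H) (A : AdmissionsFun H) : Prop :=
  IsMatchingFun M ∧ IsInterestFun I ∧ IsAdmissionsFun A ∧
  M = matchingOf A ∧ I = interestOf η M ∧ A = admissionsOf V C I

/-- The deterministic vacancy function `V^det(λ, C) = 1(λ < C)`. -/
def Vdet : ℝ → ℕ → ℝ := fun lam C => if lam < (C : ℝ) then 1 else 0

/-- The Poisson vacancy function `V^pois(λ, C) = Σ_{k<C} e^{-λ} λ^k / k!`. -/
def Vpois : ℝ → ℕ → ℝ := fun lam C =>
  ∑ k ∈ Finset.range C, Real.exp (-lam) * lam ^ k / (Nat.factorial k : ℝ)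

/-- A measure `η` on student types has strict priorities. -/
def StrictPriorities (η : Measure (Student H)) : Prop :=
  ∀ (h : H) (p : unitInterval), η {θ : Student H | Prefers θ (some h) none ∧ θ.2 h = p} = 0

end Defs

instance : Fact ((0:ℝ) ≤ 1) := ⟨zero_le_one⟩

section Cutoffs
variable {H : Type*} [Fintype H]

/-- The interest function `I^P` associated with a cutoff vector `P`: a student contributes to
`I^P_h(p)` if her priority at `h` exceeds `p` and she does not clear the cutoff at any option she
prefers to `h` (the outside option always admits, so a student preferring `∅` to `h` never
contributes). -/
def interestP (η : Measure (Student H)) (P : H → unitInterval) : InterestFun H :=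
  fun h p => ∫ θ, (if p < θ.2 h then (1:ℝ) else 0) *
    ∏ h' ∈ Finset.univ.filter (fun h' : Option H => Prefers θ h' (some h)),
      (h'.elim 0 fun h0 => if θ.2 h0 ≤ P h0 then (1:ℝ) else 0) ∂η

/-- Demand `D_h(P)` for school `h` at cutoffs `P`. -/
def demand (η : Measure (Student H)) (P : H → unitInterval) (h : H) : ℝ :=
  interestP η P h (P h)

/-- A cutoff vector `P` is `η`-market-clearing. -/
def MarketClearing (η : Measure (Student H)) (C : H → ℕ) (P : H → unitInterval) : Prop :=
  ∀ h : H, demand η P h ≤ (C h : ℝ) ∧ (0 < P h → demand η P h = (C h : ℝ))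

/-- The cutoff vector `𝓟(I)` associated with an interest function `I`:
`𝓟_h(I) = inf {p : I_h(p) < C_h}` (in the complete lattice `[0,1]`). -/
def cutoffOf (C : H → ℕ) (I : InterestFun H) (h : H) : unitInterval :=
  sInf {p : unitInterval | I h p < (C h : ℝ)}

end Cutoffs


set_option linter.unusedSectionVars false

section AuxProof
variable {H : Type*} [Fintype H]

lemma prefers_total (θ : Student H) {a b : Option H} (hne : a ≠ b) :
    Prefers θ a b ∨ Prefers θ b a := by
  rcases @lt_trichotomy _ θ.1 a b with h | h | h
  · exact Or.inr h
  · exact absurd h hne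
  · exact Or.inl h

lemma prefers_trans (θ : Student H) {a b c : Option H} (h1 : Prefers θ a b)
    (h2 : Prefers θ b c) : Prefers θ a c :=
  @lt_trans _ (@PartialOrder.toPreorder _ (@LinearOrder.toPartialOrder _ θ.1)) _ _ _ h2 h1

lemma prefers_asymm (θ : Student H) {a b : Option H} (h1 : Prefers θ a b) : ¬ Prefers θ b a :=
  @lt_asymm _ (@PartialOrder.toPreorder _ (@LinearOrder.toPartialOrder _ θ.1)) _ _ h1

lemma telescope (θ : Student H) (f : Option H → ℝ) (S : Finset (Option H)) :
    ∑ x ∈ S, f x * ∏ y ∈ S.filter (fun y => Prefers θ y x), (1 - f y)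
      = 1 - ∏ x ∈ S, (1 - f x) := by
  letI : LinearOrder (Option H) := θ.1
  have hpref : ∀ x y : Option H, Prefers θ y x ↔ x < y := fun _ _ => Iff.rfl
  induction S using Finset.induction_on_max with
  | empty => simp
  | insert a s ha ih =>
      have haS : a ∉ s := fun hmem => lt_irrefl a (ha a hmem)
      have h1 : (insert a s).filter (fun y => Prefers θ y a) = ∅ := by
        ext y
        simp only [Finset.mem_filter, Finset.mem_insert, Finset.notMem_empty, iff_false,
          not_and]
        rintro (rfl | hy) hp
        · exact lt_irrefl _ ((hpref _ _).1 hp)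
        · exact absurd ((hpref a y).1 hp) (not_lt_of_gt (ha y hy))
      have h2 : ∀ x ∈ s, (insert a s).filter (fun y => Prefers θ y x)
          = insert a (s.filter (fun y => Prefers θ y x)) := by
        intro x hx
        ext y
        simp only [Finset.mem_filter, Finset.mem_insert]
        constructor
        · rintro ⟨rfl | hy, hp⟩
          · exact Or.inl rfl
          · exact Or.inr ⟨hy, hp⟩
        · rintro (rfl | ⟨hy, hp⟩)
          · exact ⟨Or.inl rfl, (hpref x y).2 (ha x hx)⟩
          · exact ⟨Or.inr hy, hp⟩
      rw [Finset.sum_insert haS, Finset.prod_insert haS, h1]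
      have h4 : ∑ x ∈ s, f x * ∏ y ∈ (insert a s).filter (fun y => Prefers θ y x), (1 - f y)
          = (1 - f a) * ∑ x ∈ s, f x * ∏ y ∈ s.filter (fun y => Prefers θ y x), (1 - f y) := by
        rw [Finset.mul_sum]
        refine Finset.sum_congr rfl fun x hx => ?_
        have hafil : a ∉ s.filter (fun y => Prefers θ y x) :=
          fun hmem => haS (Finset.mem_filter.1 hmem).1
        rw [h2 x hx, Finset.prod_insert hafil]
        ring
      rw [h4, ih]
      simp only [Finset.prod_empty]
      ring

lemma one_sub_sum (A : AdmissionsFun H) (θ : Student H) (o : Option H) :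
    1 - ∑ h' ∈ Finset.univ.filter (fun h' : Option H => Prefers θ h' o), matchingOf A θ h'
      = ∏ h' ∈ Finset.univ.filter (fun h' : Option H => Prefers θ h' o),
          (1 - A h' (priOf θ h')) := by
  have hsum : ∑ h' ∈ Finset.univ.filter (fun h' : Option H => Prefers θ h' o),
      matchingOf A θ h'
      = ∑ x ∈ Finset.univ.filter (fun h' : Option H => Prefers θ h' o),
          (A x (priOf θ x)) *
            ∏ y ∈ (Finset.univ.filter (fun h' : Option H => Prefers θ h' o)).filter
              (fun y => Prefers θ y x), (1 - A y (priOf θ y)) := by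
    refine Finset.sum_congr rfl fun x hx => ?_
    simp only [Finset.mem_filter, Finset.mem_univ, true_and] at hx
    unfold matchingOf
    congr 1
    refine Finset.prod_congr ?_ fun _ _ => rfl
    ext y
    simp only [Finset.mem_filter, Finset.mem_univ, true_and]
    exact ⟨fun hy => ⟨prefers_trans θ hy hx, hy⟩, fun hy => hy.2⟩
  rw [hsum, telescope θ (fun x => A x (priOf θ x))]
  ring

/-- The integrand of `interestP`. -/
def Jfun (P : H → unitInterval) (h : H) (p : unitInterval) (θ : Student H) : ℝ :=
  (if p < θ.2 h then (1:ℝ) else 0) *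
    ∏ h' ∈ Finset.univ.filter (fun h' : Option H => Prefers θ h' (some h)),
      (h'.elim 0 fun h0 => if θ.2 h0 ≤ P h0 then (1:ℝ) else 0)

/-- The availability indicator at school `h`. -/
def Av (P : H → unitInterval) (h : H) (θ : Student H) : ℝ :=
  ∏ h' ∈ Finset.univ.filter (fun h' : Option H => Prefers θ h' (some h)),
      (h'.elim 0 fun h0 => if θ.2 h0 ≤ P h0 then (1:ℝ) else 0)

lemma Jfun_eq (P : H → unitInterval) (h : H) (p : unitInterval) (θ : Student H) :
    Jfun P h p θ = (if p < θ.2 h then (1:ℝ) else 0) * Av P h θ := rfl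

lemma interestP_eq (η : Measure (Student H)) (P : H → unitInterval) (h : H) (p : unitInterval) :
    interestP η P h p = ∫ θ, Jfun P h p θ ∂η := rfl

lemma measurable_aux (o : Option H) (g : Finset (Option H) → (H → unitInterval) → ℝ)
    (hg : ∀ s, Measurable (g s)) :
    Measurable (fun θ : Student H =>
      g (Finset.univ.filter (fun h' : Option H => Prefers θ h' o)) θ.2) := by
  have hrw : (fun θ : Student H =>
      g (Finset.univ.filter (fun h' : Option H => Prefers θ h' o)) θ.2)
      = fun θ => ∑ s : Finset (Option H),
          if (Finset.univ.filter (fun h' : Option H => Prefers θ h' o)) = s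
          then g s θ.2 else 0 := by
    funext θ
    rw [Finset.sum_ite_eq]
    simp
  rw [hrw]
  apply Finset.measurable_sum
  intro s _
  have hset : MeasurableSet {θ : Student H |
      (Finset.univ.filter (fun h' : Option H => Prefers θ h' o)) = s} := by
    have : {θ : Student H | (Finset.univ.filter (fun h' : Option H => Prefers θ h' o)) = s}
        = Prod.fst ⁻¹' {L : LinearOrder (Option H) |
            (Finset.univ.filter (fun h' : Option H =>
              Prefers (⟨L, fun _ => 1⟩ : Student H) h' o)) = s} := rfl
    rw [this]
    exact measurable_fst MeasurableSpace.measurableSet_top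
  exact Measurable.ite hset ((hg s).comp measurable_snd) measurable_const

lemma elim_factor_mem (P : H → unitInterval) (x : H → unitInterval) (h' : Option H) :
    (h'.elim 0 fun h0 => if x h0 ≤ P h0 then (1:ℝ) else 0) = 0 ∨
    (h'.elim 0 fun h0 => if x h0 ≤ P h0 then (1:ℝ) else 0) = 1 := by
  cases h' with
  | none => exact Or.inl rfl
  | some h0 =>
      by_cases hx : x h0 ≤ P h0
      · exact Or.inr (by simp [hx])
      · exact Or.inl (by simp [hx])

lemma measurable_Jfun (P : H → unitInterval) (h : H) (p : unitInterval) :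
    Measurable (Jfun P h p) := by
  apply measurable_aux (some h) (fun s x => (if p < x h then (1:ℝ) else 0) *
    ∏ h' ∈ s, (h'.elim 0 fun h0 => if x h0 ≤ P h0 then (1:ℝ) else 0))
  intro s
  apply Measurable.mul
  · exact Measurable.ite ((measurable_pi_apply h) measurableSet_Ioi)
      measurable_const measurable_const
  · apply Finset.measurable_prod
    intro h' _
    cases h' with
    | none => exact measurable_const
    | some h0 =>
        exact Measurable.ite ((measurable_pi_apply h0) measurableSet_Iic)
          measurable_const measurable_const

lemma Jfun_nonneg (P : H → unitInterval) (h : H) (p : unitInterval) (θ : Student H) :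
    0 ≤ Jfun P h p θ := by
  unfold Jfun
  apply mul_nonneg
  · positivity
  · refine Finset.prod_nonneg fun h' _ => ?_
    rcases elim_factor_mem P θ.2 h' with h1 | h1 <;> rw [h1] <;> norm_num

lemma Jfun_le_one (P : H → unitInterval) (h : H) (p : unitInterval) (θ : Student H) :
    Jfun P h p θ ≤ 1 := by
  unfold Jfun
  have h2 : ∏ h' ∈ Finset.univ.filter (fun h' : Option H => Prefers θ h' (some h)),
      (h'.elim 0 fun h0 => if θ.2 h0 ≤ P h0 then (1:ℝ) else 0) ≤ 1 := by
    refine Finset.prod_le_one (fun h' _ => ?_) (fun h' _ => ?_) <;>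
      rcases elim_factor_mem P θ.2 h' with h1 | h1 <;> rw [h1] <;> norm_num
  have h3 : (0:ℝ) ≤ ∏ h' ∈ Finset.univ.filter (fun h' : Option H => Prefers θ h' (some h)),
      (h'.elim 0 fun h0 => if θ.2 h0 ≤ P h0 then (1:ℝ) else 0) := by
    refine Finset.prod_nonneg fun h' _ => ?_
    rcases elim_factor_mem P θ.2 h' with h1 | h1 <;> rw [h1] <;> norm_num
  by_cases hp : p < θ.2 h <;> simp [hp] <;> nlinarith

lemma integrable_Jfun (η : Measure (Student H)) [IsFiniteMeasure η] (P : H → unitInterval)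
    (h : H) (p : unitInterval) : Integrable (Jfun P h p) η := by
  refine Integrable.mono' (integrable_const 1) (measurable_Jfun P h p).aestronglyMeasurable
    (Filter.Eventually.of_forall fun θ => ?_)
  rw [Real.norm_eq_abs, abs_of_nonneg (Jfun_nonneg P h p θ)]
  exact Jfun_le_one P h p θ

lemma Jfun_anti (P : H → unitInterval) (h : H) {p q : unitInterval} (hpq : p ≤ q)
    (θ : Student H) : Jfun P h q θ ≤ Jfun P h p θ := by
  rw [Jfun_eq, Jfun_eq]
  have hAv : 0 ≤ Av P h θ := by
    refine Finset.prod_nonneg fun h' _ => ?_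
    rcases elim_factor_mem P θ.2 h' with h1 | h1 <;> rw [h1] <;> norm_num
  apply mul_le_mul_of_nonneg_right _ hAv
  by_cases hq : q < θ.2 h
  · simp [hq, lt_of_le_of_lt hpq hq]
  · by_cases hp : p < θ.2 h <;> simp [hp, hq]

lemma interestP_anti (η : Measure (Student H)) [IsFiniteMeasure η] (P : H → unitInterval)
    (h : H) : Antitone (interestP η P h) := by
  intro p q hpq
  rw [interestP_eq, interestP_eq]
  exact integral_mono (integrable_Jfun η P h q) (integrable_Jfun η P h p)
    (fun θ => Jfun_anti P h hpq θ)

lemma isInterestFun_interestP (η : Measure (Student H)) [IsFiniteMeasure η]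
    (P : H → unitInterval) : IsInterestFun (interestP η P) := by
  intro h
  refine ⟨interestP_anti η P h, fun p => ?_⟩
  rw [interestP_eq]
  exact integral_nonneg fun θ => Jfun_nonneg P h p θ

lemma Av_nonneg (P : H → unitInterval) (h : H) (θ : Student H) : 0 ≤ Av P h θ := by
  refine Finset.prod_nonneg fun h' _ => ?_
  rcases elim_factor_mem P θ.2 h' with h1 | h1 <;> rw [h1] <;> norm_num

lemma null_between (η : Measure (Student H)) [IsFiniteMeasure η] (C : H → ℕ)
    (P : H → unitInterval) (hP : MarketClearing η C P) (h0 : H) {q : unitInterval}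
    (hq : P h0 < q) (hgq : (C h0 : ℝ) ≤ interestP η P h0 q) :
    η {θ : Student H | P h0 < θ.2 h0 ∧ θ.2 h0 ≤ q ∧ Av P h0 θ = 1} = 0 := by
  have h1 : interestP η P h0 q ≤ interestP η P h0 (P h0) :=
    interestP_anti η P h0 (le_of_lt hq)
  have h2 : interestP η P h0 (P h0) ≤ (C h0 : ℝ) := (hP h0).1
  have heq : interestP η P h0 (P h0) = interestP η P h0 q := by linarith
  have hint : ∫ θ, (Jfun P h0 (P h0) θ - Jfun P h0 q θ) ∂η = 0 := by
    rw [integral_sub (integrable_Jfun η P h0 (P h0)) (integrable_Jfun η P h0 q),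
      ← interestP_eq, ← interestP_eq, heq, sub_self]
  have hnn : 0 ≤ fun θ => Jfun P h0 (P h0) θ - Jfun P h0 q θ := by
    intro θ
    have := Jfun_anti P h0 (le_of_lt hq) θ
    simp only [Pi.zero_apply]
    linarith
  have hae : (fun θ => Jfun P h0 (P h0) θ - Jfun P h0 q θ) =ᵐ[η] 0 :=
    (integral_eq_zero_iff_of_nonneg hnn
      ((integrable_Jfun η P h0 (P h0)).sub (integrable_Jfun η P h0 q))).1 hint
  have hae2 : ∀ᵐ θ ∂η, Jfun P h0 (P h0) θ - Jfun P h0 q θ = 0 := by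
    filter_upwards [hae] with θ hθ using hθ
  have hnull : η {θ : Student H | ¬ (Jfun P h0 (P h0) θ - Jfun P h0 q θ = 0)} = 0 :=
    ae_iff.1 hae2
  refine measure_mono_null ?_ hnull
  rintro θ ⟨hθ1, hθ2, hθ3⟩
  have hJ1 : Jfun P h0 (P h0) θ = 1 := by
    rw [Jfun_eq, if_pos hθ1, hθ3, one_mul]
  have hJ2 : Jfun P h0 q θ = 0 := by
    rw [Jfun_eq, if_neg (not_lt.2 hθ2), zero_mul]
  simp only [Set.mem_setOf_eq, hJ1, hJ2]
  norm_num

lemma N2_null (η : Measure (Student H)) [IsFiniteMeasure η] (hη : StrictPriorities η)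
    (C : H → ℕ) (P : H → unitInterval) (hP : MarketClearing η C P) (h0 : H) :
    η {θ : Student H | Prefers θ (some h0) none ∧ P h0 < θ.2 h0 ∧
        (C h0 : ℝ) ≤ interestP η P h0 (θ.2 h0) ∧ Av P h0 θ = 1} = 0 := by
  set T : Set unitInterval :=
    {q : unitInterval | P h0 < q ∧ (C h0 : ℝ) ≤ interestP η P h0 q} with hT
  rcases T.eq_empty_or_nonempty with hTe | hTn
  · refine measure_mono_null ?_ (measure_empty (μ := η))
    rintro θ ⟨-, hθ2, hθ3, -⟩
    have : θ.2 h0 ∈ T := ⟨hθ2, hθ3⟩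
    rw [hTe] at this
    exact this
  · set R : Set ℝ := (fun x : unitInterval => (x : ℝ)) '' T with hR
    have hRn : R.Nonempty := hTn.image _
    have hRb : BddAbove R := by
      refine ⟨1, ?_⟩
      rintro x ⟨q, -, rfl⟩
      exact q.2.2
    have hM0 : 0 ≤ sSup R := by
      obtain ⟨x, q, hqT, rfl⟩ := hRn
      exact le_trans q.2.1 (le_csSup hRb ⟨q, hqT, rfl⟩)
    have hM1 : sSup R ≤ 1 := by
      refine csSup_le hRn ?_
      rintro x ⟨q, -, rfl⟩
      exact q.2.2
    set qs : unitInterval := ⟨sSup R, hM0, hM1⟩ with hqs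
    refine measure_mono_null (t := {θ : Student H | Prefers θ (some h0) none ∧ θ.2 h0 = qs}
        ∪ ⋃ (r : ℚ), {θ : Student H | (∃ q ∈ T, (r : ℝ) ≤ (q : ℝ)) ∧ P h0 < θ.2 h0 ∧
            ((θ.2 h0 : ℝ) ≤ (r : ℝ)) ∧ Av P h0 θ = 1}) ?_ ?_
    · rintro θ ⟨hθ1, hθ2, hθ3, hθ4⟩
      have hmem : θ.2 h0 ∈ T := ⟨hθ2, hθ3⟩
      have hle : (θ.2 h0 : ℝ) ≤ sSup R := le_csSup hRb ⟨θ.2 h0, hmem, rfl⟩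
      rcases eq_or_lt_of_le hle with heq | hlt
      · exact Or.inl ⟨hθ1, Subtype.ext heq⟩
      · obtain ⟨x, ⟨q, hqT, rfl⟩, hxlt⟩ := exists_lt_of_lt_csSup hRn hlt
        obtain ⟨r, hr1, hr2⟩ := exists_rat_btwn hxlt
        refine Or.inr (Set.mem_iUnion.2 ⟨r, ⟨q, hqT, le_of_lt hr2⟩, hθ2, le_of_lt hr1, hθ4⟩)
    · refine measure_union_null (hη h0 qs) (measure_iUnion_null fun r => ?_)
      by_cases hex : ∃ q ∈ T, (r : ℝ) ≤ (q : ℝ)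
      · obtain ⟨q, ⟨hq1, hq2⟩, hq3⟩ := hex
        refine measure_mono_null ?_ (null_between η C P hP h0 hq1 hq2)
        rintro θ ⟨-, hθ2, hθ3, hθ4⟩
        exact ⟨hθ2, Subtype.coe_le_coe.1 (le_trans hθ3 hq3), hθ4⟩
      · refine measure_mono_null ?_ (measure_empty (μ := η))
        rintro θ ⟨hc, -⟩
        exact hex hc

lemma Anone_eq (C : H → ℕ) (I : InterestFun H) (x : unitInterval) :
    admissionsOf Vdet C I none x = 1 := rfl

lemma Asome_eq (C : H → ℕ) (I : InterestFun H) (h0 : H) (x : unitInterval) :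
    admissionsOf Vdet C I (some h0) x = if I h0 x < (C h0 : ℝ) then 1 else 0 := rfl

lemma pointwise_eq (η : Measure (Student H)) [IsFiniteMeasure η] (C : H → ℕ)
    (P : H → unitInterval) (hP : MarketClearing η C P) (h : H) (p : unitInterval)
    (θ : Student H)
    (hθ0 : ¬ (Prefers θ (some h) none ∧ θ.2 h = p))
    (hθ1 : ∀ h0 : H, ¬ (Prefers θ (some h0) none ∧ θ.2 h0 = P h0))
    (hθ2 : ∀ h0 : H, ¬ (Prefers θ (some h0) none ∧ P h0 < θ.2 h0 ∧
      (C h0 : ℝ) ≤ interestP η P h0 (θ.2 h0) ∧ Av P h0 θ = 1)) :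
    Jfun P h p θ = (if p ≤ θ.2 h then (1:ℝ) else 0) *
      ∏ h' ∈ Finset.univ.filter (fun h' : Option H => Prefers θ h' (some h)),
        (1 - admissionsOf Vdet C (interestP η P) h' (priOf θ h')) := by
  set A := admissionsOf Vdet C (interestP η P) with hA
  rw [Jfun_eq]
  rcases prefers_total θ (Option.some_ne_none h) with hh | hh
  · -- some h ≻ none
    have hind : (if p < θ.2 h then (1:ℝ) else 0) = (if p ≤ θ.2 h then 1 else 0) := by
      have hne : θ.2 h ≠ p := fun he => hθ0 ⟨hh, he⟩
      rcases lt_trichotomy p (θ.2 h) with hlt | heq | hgt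
      · rw [if_pos hlt, if_pos (le_of_lt hlt)]
      · exact absurd heq.symm hne
      · rw [if_neg (not_lt.2 (le_of_lt hgt)), if_neg (not_le.2 hgt)]
    rw [hind]
    congr 1
    -- products equal
    by_cases hall : ∀ h' ∈ Finset.univ.filter (fun h' : Option H => Prefers θ h' (some h)),
        (h'.elim 0 fun h0 => if θ.2 h0 ≤ P h0 then (1:ℝ) else 0) = 1 - A h' (priOf θ h')
    · exact Finset.prod_congr rfl hall
    · push_neg at hall
      obtain ⟨w, hwS, hwne⟩ := hall
      letI : LinearOrder (Option H) := θ.1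
      set S := Finset.univ.filter (fun h' : Option H => Prefers θ h' (some h)) with hS
      set Smis := S.filter (fun h' : Option H =>
        (h'.elim 0 fun h0 => if θ.2 h0 ≤ P h0 then (1:ℝ) else 0) ≠ 1 - A h' (priOf θ h'))
        with hSmis
      have hne : Smis.Nonempty := ⟨w, Finset.mem_filter.2 ⟨hwS, hwne⟩⟩
      have hmmem : Smis.max' hne ∈ Smis := Smis.max'_mem hne
      obtain ⟨hmS, hmmis⟩ := Finset.mem_filter.1 hmmem
      obtain ⟨m0, hm0⟩ : ∃ m0 : H, Smis.max' hne = some m0 := by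
        cases hmm : Smis.max' hne with
        | none =>
            exfalso
            rw [hmm] at hmmis
            exact hmmis (by rw [hA, Anone_eq]; norm_num)
        | some m0 => exact ⟨m0, rfl⟩
      rw [hm0] at hmS hmmis
      have hPrefmh : Prefers θ (some m0) (some h) := (Finset.mem_filter.1 hmS).2
      have hPrefmn : Prefers θ (some m0) none := prefers_trans θ hPrefmh hh
      rw [hA, Asome_eq] at hmmis
      have hpri : priOf θ (some m0) = θ.2 m0 := rfl
      rw [hpri] at hmmis
      simp only [Option.elim_some] at hmmis
      by_cases hc : θ.2 m0 ≤ P m0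
      · -- contradiction
        exfalso
        rw [if_pos hc] at hmmis
        have hadm : interestP η P m0 (θ.2 m0) < (C m0 : ℝ) := by
          by_contra hcon
          rw [if_neg hcon] at hmmis
          norm_num at hmmis
        have hqne : θ.2 m0 ≠ P m0 := fun he => hθ1 m0 ⟨hPrefmn, he⟩
        have hqlt : θ.2 m0 < P m0 := lt_of_le_of_ne hc hqne
        have hPpos : 0 < P m0 := lt_of_le_of_lt unitInterval.nonneg' hqlt
        have hdem : interestP η P m0 (P m0) = (C m0 : ℝ) := (hP m0).2 hPpos
        have hmono : interestP η P m0 (P m0) ≤ interestP η P m0 (θ.2 m0) :=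
          interestP_anti η P m0 (le_of_lt hqlt)
        linarith
      · rw [if_neg hc] at hmmis
        have hPlt : P m0 < θ.2 m0 := not_le.1 hc
        have hCle : (C m0 : ℝ) ≤ interestP η P m0 (θ.2 m0) := by
          by_contra hcon
          rw [if_pos (not_le.1 hcon)] at hmmis
          norm_num at hmmis
        have hAvne : Av P m0 θ ≠ 1 := fun hAv => hθ2 m0 ⟨hPrefmn, hPlt, hCle, hAv⟩
        have hex : ∃ h'' ∈ Finset.univ.filter (fun h' : Option H => Prefers θ h' (some m0)),
            (h''.elim 0 fun h1 => if θ.2 h1 ≤ P h1 then (1:ℝ) else 0) ≠ 1 := by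
          by_contra hcon
          push_neg at hcon
          exact hAvne (Finset.prod_eq_one hcon)
        obtain ⟨w2, hw2mem, hw2ne⟩ := hex
        have hw2pref : Prefers θ w2 (some m0) := (Finset.mem_filter.1 hw2mem).2
        obtain ⟨h1, rfl⟩ : ∃ h1 : H, w2 = some h1 := by
          cases w2 with
          | none => exact absurd hw2pref (prefers_asymm θ hPrefmn)
          | some h1 => exact ⟨h1, rfl⟩
        have hrej : ¬ (θ.2 h1 ≤ P h1) := by
          intro hle
          exact hw2ne (by simp [hle])
        have hS1 : some h1 ∈ S :=
          Finset.mem_filter.2 ⟨Finset.mem_univ _, prefers_trans θ hw2pref hPrefmh⟩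
        have hnomis : ((some h1 : Option H).elim 0
            fun h0 => if θ.2 h0 ≤ P h0 then (1:ℝ) else 0) = 1 - A (some h1) (priOf θ (some h1)) := by
          by_contra hne2
          have hle := Finset.le_max' Smis (some h1) (Finset.mem_filter.2 ⟨hS1, hne2⟩)
          rw [hm0] at hle
          exact absurd hle (not_le_of_gt (show (some m0 : Option H) < some h1 from hw2pref))
        have hfac0 : ((some h1 : Option H).elim 0
            fun h0 => if θ.2 h0 ≤ P h0 then (1:ℝ) else 0) = 0 := by simp [hrej]
        rw [show Av P h θ = ∏ h' ∈ S,
            (h'.elim 0 fun h0 => if θ.2 h0 ≤ P h0 then (1:ℝ) else 0) from rfl]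
        rw [Finset.prod_eq_zero hS1 hfac0,
          Finset.prod_eq_zero hS1 (by rw [← hnomis]; exact hfac0)]
  · -- none ≻ some h : both products vanish
    have hmem : (none : Option H) ∈
        Finset.univ.filter (fun h' : Option H => Prefers θ h' (some h)) :=
      Finset.mem_filter.2 ⟨Finset.mem_univ _, hh⟩
    have hAv : Av P h θ = 0 := Finset.prod_eq_zero hmem rfl
    have hprod : ∏ h' ∈ Finset.univ.filter (fun h' : Option H => Prefers θ h' (some h)),
        (1 - A h' (priOf θ h')) = 0 :=
      Finset.prod_eq_zero hmem (by rw [hA, Anone_eq]; norm_num)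
    rw [hAv, hprod, mul_zero, mul_zero]

end AuxProof
/-- If `η` is a positive finite measure with strict priorities and the cutoff
vector `P ∈ [0,1]^H` is `η`-market-clearing, then `I^P` is `(η, V^det)`-stable. -/
theorem stmt2 {H : Type*} [Fintype H] (C : H → ℕ) (η : Measure (Student H))
    [IsFiniteMeasure η] (hη : StrictPriorities η) (P : H → unitInterval)
    (hP : MarketClearing η C P) :
    StableInterest η Vdet C (interestP η P) := by
  refine ⟨isInterestFun_interestP η P, ?_⟩
  funext h p
  rw [interestP_eq]
  have hrw : interestOf η (matchingOf (admissionsOf Vdet C (interestP η P))) h p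
      = ∫ θ, (if p ≤ θ.2 h then (1:ℝ) else 0) *
          ∏ h' ∈ Finset.univ.filter (fun h' : Option H => Prefers θ h' (some h)),
            (1 - admissionsOf Vdet C (interestP η P) h' (priOf θ h')) ∂η := by
    refine integral_congr_ae (Filter.Eventually.of_forall fun θ => ?_)
    dsimp only
    rw [one_sub_sum (admissionsOf Vdet C (interestP η P)) θ (some h)]
  rw [hrw]
  refine integral_congr_ae ?_
  have h0ae : ∀ᵐ θ ∂η, ¬ (Prefers θ (some h) none ∧ θ.2 h = p) := by
    have := (MeasureTheory.measure_eq_zero_iff_ae_notMem (μ := η)).1 (hη h p)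
    filter_upwards [this] with θ hθ using hθ
  have h1ae : ∀ᵐ θ ∂η, ∀ h0 : H, ¬ (Prefers θ (some h0) none ∧ θ.2 h0 = P h0) :=
    ae_all_iff.2 fun h0 => by
      have := (MeasureTheory.measure_eq_zero_iff_ae_notMem (μ := η)).1 (hη h0 (P h0))
      filter_upwards [this] with θ hθ using hθ
  have h2ae : ∀ᵐ θ ∂η, ∀ h0 : H, ¬ (Prefers θ (some h0) none ∧ P h0 < θ.2 h0 ∧
      (C h0 : ℝ) ≤ interestP η P h0 (θ.2 h0) ∧ Av P h0 θ = 1) :=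
    ae_all_iff.2 fun h0 => by
      have := (MeasureTheory.measure_eq_zero_iff_ae_notMem (μ := η)).1 (N2_null η hη C P hP h0)
      filter_upwards [this] with θ hθ using hθ
  filter_upwards [h0ae, h1ae, h2ae] with θ hθ0 hθ1 hθ2
  exact pointwise_eq η C P hP h p θ hθ0 hθ1 hθ2
end
end

section
/- Let η be a positive finite measure on Θ with strict priorities. If the interest function I is (η, V^det)-stable, then the cutoff vector 𝓟(I), defined by 𝓟_h(I) = inf{p ≥ 0 : I_h(p) < C_h}, is η-market-clearing, and I = I^{𝓟(I)}. -/
open MeasureTheory Filter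
open scoped Classical ENNReal

noncomputable section

open scoped Topology

lemma telescope_s3 {α : Type*} (L : LinearOrder α) (g : α → ℝ) (s : Finset α) :
    ∑ a ∈ s, g a * ∏ b ∈ @Finset.filter _ (fun b => L.lt a b)
        (fun b => Classical.propDecidable _) s, (1 - g b)
      = 1 - ∏ a ∈ s, (1 - g a) := by
  letI := L
  induction s using Finset.induction_on_min with
  | empty => simp
  | insert a s ha ih =>
    have hans : a ∉ s := fun hmem => lt_irrefl a (ha a hmem)
    rw [Finset.sum_insert hans, Finset.prod_insert hans]
    have h1 : @Finset.filter _ (fun b => L.lt a b)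
        (fun b => Classical.propDecidable _) (insert a s) = s := by
      ext b
      simp only [Finset.mem_filter, Finset.mem_insert]
      constructor
      · rintro ⟨rfl | hb, hlt⟩
        · exact absurd hlt (lt_irrefl _)
        · exact hb
      · exact fun hb => ⟨Or.inr hb, ha b hb⟩
    have h2 : ∀ c ∈ s, @Finset.filter _ (fun b => L.lt c b)
          (fun b => Classical.propDecidable _) (insert a s)
        = @Finset.filter _ (fun b => L.lt c b)
            (fun b => Classical.propDecidable _) s := by
      intro c hc
      ext b
      simp only [Finset.mem_filter, Finset.mem_insert]
      constructor
      · rintro ⟨rfl | hb, hlt⟩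
        · exact absurd (lt_trans (ha c hc) hlt) (lt_irrefl _)
        · exact ⟨hb, hlt⟩
      · exact fun ⟨hb, hlt⟩ => ⟨Or.inr hb, hlt⟩
    rw [h1, Finset.sum_congr rfl (fun c hc => by rw [h2 c hc]), ih]
    ring

lemma upperset_measurable {f : unitInterval → ℝ} (hf : Antitone f) (c : ℝ) :
    MeasurableSet {q | f q < c} := by
  set U := {q : unitInterval | f q < c} with hUdef
  by_cases hm : sInf U ∈ U
  · have hU : U = Set.Ici (sInf U) := by
      ext q
      constructor
      · exact fun hq => sInf_le hq
      · intro hq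
        exact lt_of_le_of_lt (hf hq) hm
    rw [hU]; exact measurableSet_Ici
  · have hU : U = Set.Ioi (sInf U) := by
      ext q
      constructor
      · intro hq
        exact lt_of_le_of_ne (sInf_le hq) (fun he => hm (he ▸ hq))
      · intro hq
        obtain ⟨r, hr, hrq⟩ : ∃ r ∈ U, r < q := by
          by_contra hc
          push_neg at hc
          exact absurd (le_sInf hc) (not_le.2 hq)
        exact lt_of_le_of_lt (hf hrq.le) hr
    rw [hU]; exact measurableSet_Ioi

set_option maxHeartbeats 2000000 in
/-- If `η` is a positive finite measure with strict priorities and the interest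
function `I` is `(η, V^det)`-stable, then the cutoff vector `𝓟(I)` is `η`-market-clearing and
`I = I^{𝓟(I)}`. -/
theorem stmt3 {H : Type*} [Fintype H] (C : H → ℕ) (η : Measure (Student H))
    [IsFiniteMeasure η] (hη : StrictPriorities η) (I : InterestFun H)
    (hI : StableInterest η Vdet C I) :
    MarketClearing η C (cutoffOf C I) ∧ I = interestP η (cutoffOf C I) := by
  set P := cutoffOf C I with hPdef
  set A := admissionsOf Vdet C I with hAdef
  -- basic facts
  have hIant : ∀ h, Antitone (I h) := fun h => (hI.1 h).1
  have hS_lt : ∀ (h : H) (q : unitInterval), P h < q → I h q < (C h : ℝ) := by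
    intro h q hq
    obtain ⟨r, hr, hrq⟩ : ∃ r ∈ {p : unitInterval | I h p < (C h : ℝ)}, r < q := by
      by_contra hc
      push_neg at hc
      exact absurd (le_sInf hc) (not_le.2 hq)
    exact lt_of_le_of_lt (hIant h hrq.le) hr
  have hS_ge : ∀ (h : H) (q : unitInterval), q < P h → (C h : ℝ) ≤ I h q := by
    intro h q hq
    by_contra hc
    exact absurd (sInf_le (not_le.1 hc) : P h ≤ q) (not_le.2 hq)
  have hAnone : ∀ q, A none q = 1 := fun q => rfl
  have hAsome : ∀ (h0 : H) q, A (some h0) q = if I h0 q < (C h0 : ℝ) then 1 else 0 := by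
    intro h0 q; rfl
  have hAcut : ∀ (h0 : H) (q : unitInterval), q ≠ P h0 →
      (1 : ℝ) - A (some h0) q = if q ≤ P h0 then 1 else 0 := by
    intro h0 q hne
    rcases lt_or_gt_of_ne hne with hlt | hgt
    · rw [hAsome, if_neg (not_lt.2 (hS_ge h0 q hlt)), if_pos hlt.le]
      ring
    · rw [hAsome, if_pos (hS_lt h0 q hgt), if_neg (not_le.2 hgt)]
      ring
  have hA01 : ∀ (h' : Option H) q, A h' q = 0 ∨ A h' q = 1 := by
    rintro (_ | h0) q
    · exact Or.inr rfl
    · rw [hAsome]; split_ifs <;> simp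
  -- the product over preferred options
  have hIeq : ∀ (h : H) (p : unitInterval), I h p =
      ∫ θ, (if p ≤ θ.2 h then (1:ℝ) else 0) *
        ∏ h' ∈ Finset.univ.filter (fun h' : Option H => Prefers θ h' (some h)),
          (1 - A h' (priOf θ h')) ∂η := by
    intro h p
    conv_lhs => rw [hI.2]
    refine integral_congr_ae (Eventually.of_forall fun θ => ?_)
    beta_reduce
    congr 1
    have hflt : ∀ h' ∈ Finset.univ.filter (fun h' : Option H => Prefers θ h' (some h)),
        Finset.univ.filter (fun h'' : Option H => Prefers θ h'' h')
          = (Finset.univ.filter (fun h' : Option H => Prefers θ h' (some h))).filter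
              (fun h'' => Prefers θ h'' h') := by
      intro h' hh'
      rw [Finset.mem_filter] at hh'
      ext h''
      simp only [Finset.mem_filter, Finset.mem_univ, true_and]
      letI := θ.1
      exact ⟨fun hp => ⟨lt_trans hh'.2 hp, hp⟩, fun hp => hp.2⟩
    have hstep : ∑ h' ∈ Finset.univ.filter (fun h' : Option H => Prefers θ h' (some h)),
          matchingOf (admissionsOf Vdet C I) θ h'
        = ∑ h' ∈ Finset.univ.filter (fun h' : Option H => Prefers θ h' (some h)),
            A h' (priOf θ h') *
              ∏ h'' ∈ (Finset.univ.filter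
                  (fun h' : Option H => Prefers θ h' (some h))).filter
                  (fun h'' => Prefers θ h'' h'),
                (1 - A h'' (priOf θ h'')) := by
      refine Finset.sum_congr rfl fun h' hh' => ?_
      rw [show matchingOf (admissionsOf Vdet C I) θ h' = A h' (priOf θ h') *
          ∏ h'' ∈ Finset.univ.filter (fun h'' : Option H => Prefers θ h'' h'),
            (1 - A h'' (priOf θ h'')) from rfl, hflt h' hh']
    rw [hstep]
    have this' : ∑ h' ∈ Finset.univ.filter (fun h' : Option H => Prefers θ h' (some h)),
          A h' (priOf θ h') *
            ∏ h'' ∈ (Finset.univ.filter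
                (fun h' : Option H => Prefers θ h' (some h))).filter
                (fun h'' => Prefers θ h'' h'),
              (1 - A h'' (priOf θ h''))
        = 1 - ∏ h' ∈ Finset.univ.filter (fun h' : Option H => Prefers θ h' (some h)),
            (1 - A h' (priOf θ h')) :=
      telescope_s3 θ.1 (fun h' => A h' (priOf θ h'))
        (Finset.univ.filter (fun h' : Option H => Prefers θ h' (some h)))
    linarith [this']
  -- I equals the cutoff interest function
  have hIP : ∀ (h : H) (p : unitInterval), I h p = interestP η P h p := by
    intro h p
    rw [hIeq h p]
    refine integral_congr_ae ?_
    have hN : η ({θ : Student H | Prefers θ (some h) none ∧ θ.2 h = p} ∪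
        ⋃ h0 : H, {θ : Student H | Prefers θ (some h0) none ∧ θ.2 h0 = P h0}) = 0 := by
      refine measure_union_null (hη h p) (measure_iUnion_null fun h0 => hη h0 (P h0))
    filter_upwards [measure_eq_zero_iff_ae_notMem.mp hN] with θ hθ
    simp only [Set.mem_union, Set.mem_iUnion, Set.mem_setOf_eq, not_or, not_exists] at hθ
    obtain ⟨hθ1, hθ2⟩ := hθ
    letI := θ.1
    by_cases hpref : Prefers θ (some h) none
    · -- student prefers h to the outside option
      have hne_p : θ.2 h ≠ p := fun he => hθ1 ⟨hpref, he⟩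
      have hif : (if p ≤ θ.2 h then (1:ℝ) else 0) = if p < θ.2 h then (1:ℝ) else 0 := by
        split_ifs with h1 h2 h2
        · rfl
        · exact absurd (lt_of_le_of_ne h1 (Ne.symm hne_p)) h2
        · exact absurd h2.le h1
        · rfl
      rw [hif]
      congr 1
      refine Finset.prod_congr rfl fun h' hh' => ?_
      rw [Finset.mem_filter] at hh'
      match h' with
      | none =>
        exact absurd (show (some h : Option H) < none from hh'.2)
          (lt_asymm (show (none : Option H) < some h from hpref))
      | some h0 =>
        have hpref0 : Prefers θ (some h0) none :=
          lt_trans (show (none : Option H) < some h from hpref)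
            (show (some h : Option H) < some h0 from hh'.2)
        have hne0 : θ.2 h0 ≠ P h0 := fun he => hθ2 h0 ⟨hpref0, he⟩
        exact hAcut h0 (θ.2 h0) hne0
    · -- student prefers the outside option to h
      have hpref' : Prefers θ none (some h) := by
        rcases le_total (some h : Option H) none with hle | hle
        · exact lt_of_le_of_ne hle (Option.some_ne_none h)
        · exact absurd (lt_of_le_of_ne hle (Ne.symm (Option.some_ne_none h)) :
            (none : Option H) < some h) hpref
      have hnone : (none : Option H) ∈
          Finset.univ.filter (fun h' : Option H => Prefers θ h' (some h)) :=
        Finset.mem_filter.2 ⟨Finset.mem_univ _, hpref'⟩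
      rw [Finset.prod_eq_zero hnone (by simp [hAnone] : (1:ℝ) - A none (priOf θ none) = 0),
        Finset.prod_eq_zero hnone (by simp : (Option.elim none (0:ℝ)
          fun h0 => if θ.2 h0 ≤ P h0 then (1:ℝ) else 0) = 0), mul_zero, mul_zero]
  -- measurability and integrability of the integrand
  have hA_mem : ∀ (h' : Option H) q, (0:ℝ) ≤ 1 - A h' q ∧ 1 - A h' q ≤ 1 := by
    intro h' q
    rcases hA01 h' q with h0 | h0 <;> rw [h0] <;> norm_num
  have hg_meas : ∀ h : H, Measurable (fun θ : Student H =>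
      ∏ h' ∈ Finset.univ.filter (fun h' : Option H => Prefers θ h' (some h)),
        (1 - A h' (priOf θ h'))) := by
    intro h
    have hgrw : (fun θ : Student H =>
        ∏ h' ∈ Finset.univ.filter (fun h' : Option H => Prefers θ h' (some h)),
          (1 - A h' (priOf θ h')))
        = fun θ : Student H => ∑ t ∈ (Finset.univ : Finset (Finset (Option H))),
            (@ite ℝ (Finset.univ.filter (fun h' : Option H => Prefers θ h' (some h)) = t)
              (Classical.propDecidable _) 1 0) * ∏ h' ∈ t, (1 - A h' (priOf θ h')) := by
      funext θ
      simp only [ite_mul, one_mul, zero_mul, Finset.sum_ite_eq, Finset.mem_univ, if_true]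
    rw [hgrw]
    refine Finset.measurable_sum _ fun t _ => Measurable.mul ?_ ?_
    · exact (measurable_from_top
        (f := fun L : LinearOrder (Option H) =>
          @ite ℝ (@Finset.filter _ (fun h' : Option H => L.lt (some h) h')
              (fun h' => Classical.propDecidable _) Finset.univ = t)
            (Classical.propDecidable _) 1 0)).comp measurable_fst
    · refine Finset.measurable_prod _ fun h' _ => ?_
      match h' with
      | none => simpa [hAnone] using (measurable_const : Measurable fun _ : Student H => (0:ℝ))
      | some h0 =>
        have hU : MeasurableSet {q : unitInterval | I h0 q < (C h0 : ℝ)} :=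
          upperset_measurable (hIant h0) _
        have hphi : Measurable (fun q : unitInterval =>
            if I h0 q < (C h0 : ℝ) then (1:ℝ) else 0) :=
          Measurable.ite hU measurable_const measurable_const
        have : Measurable fun θ : Student H =>
            (if I h0 (θ.2 h0) < (C h0 : ℝ) then (1:ℝ) else 0) :=
          hphi.comp ((measurable_pi_apply h0).comp measurable_snd)
        have h2 : Measurable fun θ : Student H =>
            (1:ℝ) - if I h0 (θ.2 h0) < (C h0 : ℝ) then (1:ℝ) else 0 := by
          exact measurable_const.sub this
        simpa [hAsome, priOf] using h2
  have hF_meas : ∀ (h : H) (p : unitInterval), Measurable (fun θ : Student H =>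
      (if p ≤ θ.2 h then (1:ℝ) else 0) *
        ∏ h' ∈ Finset.univ.filter (fun h' : Option H => Prefers θ h' (some h)),
          (1 - A h' (priOf θ h'))) := by
    intro h p
    refine Measurable.mul ?_ (hg_meas h)
    have : MeasurableSet {θ : Student H | p ≤ θ.2 h} :=
      ((measurable_pi_apply h).comp measurable_snd) measurableSet_Ici
    exact Measurable.ite this measurable_const measurable_const
  have hg01 : ∀ (h : H) (θ : Student H),
      0 ≤ (∏ h' ∈ Finset.univ.filter (fun h' : Option H => Prefers θ h' (some h)),
        (1 - A h' (priOf θ h'))) ∧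
      (∏ h' ∈ Finset.univ.filter (fun h' : Option H => Prefers θ h' (some h)),
        (1 - A h' (priOf θ h'))) ≤ 1 := by
    intro h θ
    constructor
    · exact Finset.prod_nonneg fun h' _ => (hA_mem h' _).1
    · exact Finset.prod_le_one (fun h' _ => (hA_mem h' _).1) (fun h' _ => (hA_mem h' _).2)
  have hF_int : ∀ (h : H) (p : unitInterval), Integrable (fun θ : Student H =>
      (if p ≤ θ.2 h then (1:ℝ) else 0) *
        ∏ h' ∈ Finset.univ.filter (fun h' : Option H => Prefers θ h' (some h)),
          (1 - A h' (priOf θ h'))) η := by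
    intro h p
    refine Integrable.mono' (integrable_const (1:ℝ)) (hF_meas h p).aestronglyMeasurable
      (Eventually.of_forall fun θ => ?_)
    rw [Real.norm_eq_abs, abs_mul]
    have h1 : |if p ≤ θ.2 h then (1:ℝ) else 0| ≤ 1 := by split_ifs <;> norm_num
    have h2 : |∏ h' ∈ Finset.univ.filter (fun h' : Option H => Prefers θ h' (some h)),
        (1 - A h' (priOf θ h'))| ≤ 1 := by
      rw [abs_of_nonneg (hg01 h θ).1]; exact (hg01 h θ).2
    calc |if p ≤ θ.2 h then (1:ℝ) else 0| * |∏ h' ∈ Finset.univ.filter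
            (fun h' : Option H => Prefers θ h' (some h)), (1 - A h' (priOf θ h'))|
        ≤ 1 * 1 := by
          exact mul_le_mul h1 h2 (abs_nonneg _) zero_le_one
      _ = 1 := one_mul 1
  -- if the student does not prefer h to the outside option, the product vanishes
  have hgnp : ∀ (h : H) (θ : Student H), ¬ Prefers θ (some h) none →
      (∏ h' ∈ Finset.univ.filter (fun h' : Option H => Prefers θ h' (some h)),
        (1 - A h' (priOf θ h'))) = 0 := by
    intro h θ hpref
    letI := θ.1
    have hpref' : Prefers θ none (some h) := by
      rcases le_total (some h : Option H) none with hle | hle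
      · exact lt_of_le_of_ne hle (Option.some_ne_none h)
      · exact absurd (lt_of_le_of_ne hle (Ne.symm (Option.some_ne_none h)) :
          (none : Option H) < some h) hpref
    have hnone : (none : Option H) ∈
        Finset.univ.filter (fun h' : Option H => Prefers θ h' (some h)) :=
      Finset.mem_filter.2 ⟨Finset.mem_univ _, hpref'⟩
    exact Finset.prod_eq_zero hnone (by simp [hAnone])
  -- difference bound
  have hdiff : ∀ (h : H) (a b : unitInterval), a ≤ b → ∀ T : Set (Student H),
      MeasurableSet T →
      ({θ : Student H | a ≤ θ.2 h ∧ θ.2 h < b ∧ Prefers θ (some h) none} ⊆ T) →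
      I h a ≤ I h b + (η T).toReal := by
    intro h a b hab T hT hsub
    rw [hIeq h a, hIeq h b]
    have hTi : Integrable (T.indicator fun _ : Student H => (1:ℝ)) η :=
      (integrable_const 1).indicator hT
    have hpt : ∀ θ : Student H,
        (if a ≤ θ.2 h then (1:ℝ) else 0) *
            ∏ h' ∈ Finset.univ.filter (fun h' : Option H => Prefers θ h' (some h)),
              (1 - A h' (priOf θ h'))
          ≤ (if b ≤ θ.2 h then (1:ℝ) else 0) *
              ∏ h' ∈ Finset.univ.filter (fun h' : Option H => Prefers θ h' (some h)),
                (1 - A h' (priOf θ h'))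
            + T.indicator (fun _ => 1) θ := by
      intro θ
      by_cases h1 : b ≤ θ.2 h
      · have h2 : a ≤ θ.2 h := le_trans hab h1
        rw [if_pos h1, if_pos h2]
        exact le_add_of_nonneg_right (Set.indicator_nonneg (fun _ _ => zero_le_one) θ)
      · by_cases h2 : a ≤ θ.2 h
        · rw [if_pos h2, if_neg h1, one_mul, zero_mul, zero_add]
          by_cases h3 : Prefers θ (some h) none
          · have hmem : θ ∈ T := hsub ⟨h2, not_le.1 h1, h3⟩
            rw [Set.indicator_of_mem hmem]
            exact (hg01 h θ).2
          · rw [hgnp h θ h3]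
            exact Set.indicator_nonneg (fun _ _ => zero_le_one) θ
        · rw [if_neg h2, if_neg h1, zero_mul, zero_add]
          exact Set.indicator_nonneg (fun _ _ => zero_le_one) θ
    have key := integral_mono (hF_int h a) ((hF_int h b).add hTi) hpt
    simp only [Pi.add_apply] at key
    rw [integral_add (hF_int h b) hTi] at key
    have hind : ∫ θ, T.indicator (fun _ => (1:ℝ)) θ ∂η = (η T).toReal := by
      rw [MeasureTheory.integral_indicator_const (1:ℝ) hT]; simp; rfl
    rw [hind] at key
    exact key
  -- sequence limit helpers
  have hseq : ∀ c : ℝ, Tendsto (fun n : ℕ => c / (n+1)) atTop (𝓝 0) := by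
    intro c
    have := tendsto_one_div_add_atTop_nhds_zero_nat.const_mul c
    simpa [div_eq_mul_inv] using this
  have hmeaslim : ∀ (T : ℕ → Set (Student H)), (∀ n, MeasurableSet (T n)) → Antitone T →
      η (⋂ n, T n) = 0 → Tendsto (fun n => (η (T n)).toReal) atTop (𝓝 0) := by
    intro T hTm hTa hT0
    have h1 : Tendsto (fun n => η (T n)) atTop (𝓝 0) := by
      have := tendsto_measure_iInter_atTop (fun n => (hTm n).nullMeasurableSet) hTa
        ⟨0, measure_ne_top η _⟩
      rwa [hT0] at this
    have h2 := (ENNReal.tendsto_toReal (by simp : (0:ℝ≥0∞) ≠ ⊤)).comp h1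
    exact h2
  have hTmeas : ∀ (h : H) (a b : unitInterval),
      MeasurableSet {θ : Student H | a ≤ θ.2 h ∧ θ.2 h < b ∧ Prefers θ (some h) none} := by
    intro h a b
    have e1 : MeasurableSet {θ : Student H | a ≤ θ.2 h} :=
      ((measurable_pi_apply h).comp measurable_snd) measurableSet_Ici
    have e2 : MeasurableSet {θ : Student H | θ.2 h < b} :=
      ((measurable_pi_apply h).comp measurable_snd) measurableSet_Iio
    have e3 : MeasurableSet {θ : Student H | Prefers θ (some h) none} :=
      measurable_fst (show MeasurableSet[⊤]
        {L : LinearOrder (Option H) | L.lt none (some h)} from trivial)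
    exact (e1.inter (e2.inter e3) : _)
  -- upper bound
  have hub : ∀ h : H, I h (P h) ≤ (C h : ℝ) := by
    intro h
    by_cases hP1 : P h = 1
    · have h0 : interestP η P h 1 = 0 := by
        calc interestP η P h 1 = ∫ _θ : Student H, (0:ℝ) ∂η :=
              integral_congr_ae (Eventually.of_forall fun θ => by
                beta_reduce
                rw [if_neg (not_lt.2 unitInterval.le_one'), zero_mul])
          _ = 0 := integral_zero _ _
      rw [hIP h (P h), hP1, h0]
      exact Nat.cast_nonneg _
    · have hPlt : P h < 1 := lt_of_le_of_ne unitInterval.le_one' hP1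
      set c : ℝ := (P h : ℝ) with hc
      have hc1 : c < 1 := by exact Subtype.coe_lt_coe.mpr hPlt
      have hc0 : (0:ℝ) ≤ c := (P h).2.1
      have h1c : (0:ℝ) ≤ 1 - c := by linarith
      set q : ℕ → unitInterval := fun n => ⟨c + (1-c)/(n+1),
        ⟨add_nonneg hc0 (div_nonneg h1c (by positivity)),
          by have := div_le_self h1c (by push_cast; linarith : (1:ℝ) ≤ (n:ℝ)+1); linarith⟩⟩
        with hq
      have hqgt : ∀ n, P h < q n := by
        intro n
        rw [← Subtype.coe_lt_coe]
        show c < c + (1-c)/(n+1)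
        have : (0:ℝ) < (1-c)/(n+1) := div_pos (by linarith) (by positivity)
        linarith
      set T : ℕ → Set (Student H) := fun n =>
        {θ : Student H | P h ≤ θ.2 h ∧ θ.2 h < q n ∧ Prefers θ (some h) none} with hT
      have hTa : Antitone T := by
        intro m n hmn θ hθ
        refine ⟨hθ.1, lt_of_lt_of_le hθ.2.1 ?_, hθ.2.2⟩
        rw [← Subtype.coe_le_coe]
        show c + (1-c)/(n+1) ≤ c + (1-c)/(m+1)
        have : (1-c)/((n:ℝ)+1) ≤ (1-c)/((m:ℝ)+1) := by
          apply div_le_div_of_nonneg_left h1c (by positivity)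
          push_cast; exact_mod_cast (by exact_mod_cast Nat.succ_le_succ hmn : (m:ℕ)+1 ≤ n+1)
        linarith
      have hInull : η (⋂ n, T n) = 0 := by
        refine measure_mono_null ?_ (hη h (P h))
        intro θ hθ
        simp only [Set.mem_iInter] at hθ
        have hple : P h ≤ θ.2 h := (hθ 0).1
        have hcoe : (θ.2 h : ℝ) ≤ c := by
          have hten : Tendsto (fun n : ℕ => c + (1-c)/(n+1)) atTop (𝓝 c) := by
            simpa using tendsto_const_nhds.add (hseq (1-c))
          exact ge_of_tendsto' hten (fun n => (Subtype.coe_lt_coe.mpr (hθ n).2.1).le)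
        have : θ.2 h = P h := le_antisymm (Subtype.coe_le_coe.mp hcoe) hple
        exact ⟨(hθ 0).2.2, this⟩
      have hlim := hmeaslim T (fun n => hTmeas h (P h) (q n)) hTa hInull
      have hstep : ∀ n, I h (P h) ≤ (C h : ℝ) + (η (T n)).toReal := by
        intro n
        have := hdiff h (P h) (q n) (hqgt n).le (T n) (hTmeas h (P h) (q n)) subset_rfl
        have h2 := hS_lt h (q n) (hqgt n)
        linarith
      have hten : Tendsto (fun n => (C h : ℝ) + (η (T n)).toReal) atTop (𝓝 (C h : ℝ)) := by
        simpa using tendsto_const_nhds.add hlim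
      exact ge_of_tendsto' hten hstep
  -- lower bound
  have hlb : ∀ h : H, 0 < P h → (C h : ℝ) ≤ I h (P h) := by
    intro h hpos
    set c : ℝ := (P h : ℝ) with hc
    have hc0 : (0:ℝ) < c := by exact Subtype.coe_lt_coe.mpr hpos
    have hc1 : c ≤ 1 := (P h).2.2
    set p : ℕ → unitInterval := fun n => ⟨c - c/(n+1),
      ⟨by have := div_le_self hc0.le (by push_cast; linarith : (1:ℝ) ≤ (n:ℝ)+1); linarith,
        by have : (0:ℝ) < c/((n:ℝ)+1) := div_pos hc0 (by positivity); linarith⟩⟩ with hp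
    have hplt : ∀ n, p n < P h := by
      intro n
      rw [← Subtype.coe_lt_coe]
      show c - c/(n+1) < c
      have : (0:ℝ) < c/((n:ℝ)+1) := div_pos hc0 (by positivity)
      linarith
    set T : ℕ → Set (Student H) := fun n =>
      {θ : Student H | p n ≤ θ.2 h ∧ θ.2 h < P h ∧ Prefers θ (some h) none} with hT
    have hTa : Antitone T := by
      intro m n hmn θ hθ
      refine ⟨le_trans ?_ hθ.1, hθ.2.1, hθ.2.2⟩
      rw [← Subtype.coe_le_coe]
      show c - c/(m+1) ≤ c - c/(n+1)
      have : c/((n:ℝ)+1) ≤ c/((m:ℝ)+1) := by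
        apply div_le_div_of_nonneg_left hc0.le (by positivity)
        push_cast; exact_mod_cast (by exact_mod_cast Nat.succ_le_succ hmn : (m:ℕ)+1 ≤ n+1)
      linarith
    have hInull : η (⋂ n, T n) = 0 := by
      have hempty : (⋂ n, T n) = ∅ := by
        rw [Set.eq_empty_iff_forall_notMem]
        intro θ hθ
        simp only [Set.mem_iInter] at hθ
        have hlt : (θ.2 h : ℝ) < c := Subtype.coe_lt_coe.mpr (hθ 0).2.1
        have hcoe : c ≤ (θ.2 h : ℝ) := by
          have hten : Tendsto (fun n : ℕ => c - c/(n+1)) atTop (𝓝 c) := by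
            simpa using tendsto_const_nhds.sub (hseq c)
          exact le_of_tendsto' hten (fun n => Subtype.coe_le_coe.mpr (hθ n).1)
        linarith
      rw [hempty]; exact measure_empty
    have hlim := hmeaslim T (fun n => hTmeas h (p n) (P h)) hTa hInull
    have hstep : ∀ n, (C h : ℝ) ≤ I h (P h) + (η (T n)).toReal := by
      intro n
      have := hdiff h (p n) (P h) (hplt n).le (T n) (hTmeas h (p n) (P h)) subset_rfl
      have h2 := hS_ge h (p n) (hplt n)
      linarith
    have hten : Tendsto (fun n => I h (P h) + (η (T n)).toReal) atTop (𝓝 (I h (P h))) := by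
      simpa using tendsto_const_nhds.add hlim
    exact ge_of_tendsto' hten hstep
  -- conclusion
  have hdemand : ∀ h : H, demand η P h = I h (P h) := fun h => (hIP h (P h)).symm
  refine ⟨fun h => ?_, funext fun h => funext fun p => hIP h p⟩
  constructor
  · rw [hdemand h]; exact hub h
  · intro hpos
    rw [hdemand h]
    exact le_antisymm (hub h) (hlb h hpos)
end
end

section
/- (Rural Hospital Theorem) If η has strict priorities and the vacancy function 𝒱 is weakly decreasing in its first argument, then for any two (η, 𝒱)-stable outcomes (M, I, A) and (M̃, Ĩ, Ã): for each h ∈ H₀, ∫ M_h(θ) dη(θ) = ∫ M̃_h(θ) dη(θ), and for η-almost every θ ∈ Θ, Σ_{h ≻^θ ∅} M_h(θ) = Σ_{h ≻^θ ∅} M̃_h(θ). -/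
open MeasureTheory Filter
open scoped Classical ENNReal

noncomputable section

namespace RHT

open Set

variable {H : Type*} [Fintype H]

instance : MeasurableSingletonClass (LinearOrder (Option H)) :=
  ⟨fun _ => MeasurableSpace.measurableSet_top⟩

lemma countable_LO : Countable (LinearOrder (Option H)) := by
  have hinj : Function.Injective
      (fun r : LinearOrder (Option H) => fun a b : Option H =>
        @decide (r.le a b) (r.toDecidableLE a b)) := by
    intro r1 r2 hEq
    apply LinearOrder.ext
    intro x y
    have h := congrFun (congrFun hEq x) y
    exact decide_eq_decide.mp h
  exact hinj.countable

lemma measurable_slices {γ : Type*} [MeasurableSpace γ] {f : Student H → γ}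
    (hf : ∀ r : LinearOrder (Option H),
      Measurable fun x : H → unitInterval => f (r, x)) :
    Measurable f := by
  haveI : Countable (LinearOrder (Option H)) := countable_LO
  have h : Measurable fun q : (H → unitInterval) × LinearOrder (Option H) => f (q.2, q.1) :=
    measurable_from_prod_countable_left fun r => hf r
  exact h.comp measurable_swap

lemma telescope {α : Type*} [LinearOrder α] (S : Finset α) (f : α → ℝ) :
    ∑ x ∈ S, f x * ∏ y ∈ S.filter (fun y => x < y), (1 - f y)
      = 1 - ∏ x ∈ S, (1 - f x) := by
  classical
  induction S using Finset.induction_on_min with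
  | empty => simp
  | insert a s ha ih =>
    have hanotmem : a ∉ s := fun hmem => lt_irrefl a (ha a hmem)
    rw [Finset.sum_insert hanotmem, Finset.prod_insert hanotmem]
    have h1 : (insert a s).filter (fun y => a < y) = s := by
      ext y
      simp only [Finset.mem_filter, Finset.mem_insert]
      constructor
      · rintro ⟨h | h, hlt⟩
        · exact absurd hlt (by simp [h])
        · exact h
      · intro hy; exact ⟨Or.inr hy, ha y hy⟩
    have h2 : ∀ x ∈ s, (insert a s).filter (fun y => x < y) = s.filter (fun y => x < y) := by
      intro x hx
      ext y
      simp only [Finset.mem_filter, Finset.mem_insert]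
      constructor
      · rintro ⟨h | h, hlt⟩
        · exact absurd ((h ▸ hlt : x < a).trans (ha x hx)) (lt_irrefl x)
        · exact ⟨h, hlt⟩
      · rintro ⟨hy, hlt⟩; exact ⟨Or.inr hy, hlt⟩
    rw [h1, Finset.sum_congr rfl fun x hx => by rw [h2 x hx], ih]
    ring

/-- The "still available at `h`" probability. -/
def Dfun (A : AdmissionsFun H) (h : Option H) (θ : Student H) : ℝ :=
  ∏ h' ∈ Finset.univ.filter (fun h' : Option H => Prefers θ h' h), (1 - A h' (priOf θ h'))

lemma matchingOf_eq (A : AdmissionsFun H) (θ : Student H) (h : Option H) :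
    matchingOf A θ h = A h (priOf θ h) * Dfun A h θ := rfl

lemma sum_matchingOf (A : AdmissionsFun H) (θ : Student H) (o : Option H) :
    ∑ h' ∈ Finset.univ.filter (fun h' : Option H => Prefers θ h' o), matchingOf A θ h'
      = 1 - Dfun A o θ := by
  classical
  letI : LinearOrder (Option H) := θ.1
  have hPre : ∀ a b : Option H, Prefers θ a b = (b < a) := fun a b => rfl
  set f : Option H → ℝ := fun x => A x (priOf θ x) with hf
  set S : Finset (Option H) := Finset.univ.filter (fun h' : Option H => o < h') with hS
  have hSeq : Finset.univ.filter (fun h' : Option H => Prefers θ h' o) = S := by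
    simp only [hPre, hS]
  have hDeq : Dfun A o θ = ∏ x ∈ S, (1 - f x) := by
    rw [Dfun, hSeq]
  rw [hSeq, hDeq, ← telescope S f]
  apply Finset.sum_congr rfl
  intro x hx
  rw [matchingOf_eq]
  congr 1
  have hx' : o < x := (Finset.mem_filter.mp hx).2
  have : Finset.univ.filter (fun h' : Option H => Prefers θ h' x)
      = S.filter (fun y => x < y) := by
    ext y
    simp only [hPre, Finset.mem_filter, Finset.mem_univ, true_and, hS]
    exact ⟨fun h => ⟨hx'.trans h, h⟩, fun h => h.2⟩
  rw [Dfun, this]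

lemma measurable_of_monotone_uI {g : unitInterval → ℝ} (hg : Monotone g) : Measurable g := by
  have h : Monotone fun x : ℝ => g (Set.projIcc 0 1 zero_le_one x) :=
    hg.comp (monotone_projIcc zero_le_one)
  have hm : Measurable fun x : ℝ => g (Set.projIcc 0 1 zero_le_one x) := h.measurable
  have hgeq : g = (fun x : ℝ => g (Set.projIcc 0 1 zero_le_one x)) ∘ (Subtype.val) := by
    funext p
    simp [Set.projIcc_val]
  rw [hgeq]
  exact hm.comp measurable_subtype_coe

lemma Dfun_nonneg {A : AdmissionsFun H} (hA1 : ∀ h p, A h p ≤ 1) (h : Option H)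
    (θ : Student H) : 0 ≤ Dfun A h θ :=
  Finset.prod_nonneg fun h' _ => by linarith [hA1 h' (priOf θ h')]

lemma Dfun_le_one {A : AdmissionsFun H} (hA0 : ∀ h p, 0 ≤ A h p) (hA1 : ∀ h p, A h p ≤ 1)
    (h : Option H) (θ : Student H) : Dfun A h θ ≤ 1 :=
  Finset.prod_le_one (fun h' _ => by linarith [hA1 h' (priOf θ h')])
    (fun h' _ => by linarith [hA0 h' (priOf θ h')])

lemma Dfun_anti {A B : AdmissionsFun H} (hB1 : ∀ h p, B h p ≤ 1)
    (hle : ∀ h p, A h p ≤ B h p) (h : Option H) (θ : Student H) :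
    Dfun B h θ ≤ Dfun A h θ :=
  Finset.prod_le_prod (fun h' _ => by linarith [hB1 h' (priOf θ h')])
    (fun h' _ => by linarith [hle h' (priOf θ h')])

lemma measurable_A_pri {A : AdmissionsFun H} (hAm : ∀ h, Monotone (A h)) (h : Option H) :
    Measurable fun θ : Student H => A h (priOf θ h) := by
  cases h with
  | none =>
    show Measurable fun _ : Student H => A none 1
    exact measurable_const
  | some h0 =>
    exact (measurable_of_monotone_uI (hAm (some h0))).comp
      ((measurable_pi_apply h0).comp measurable_snd)

lemma measurable_Dfun {A : AdmissionsFun H} (hAm : ∀ h, Monotone (A h)) (h : Option H) :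
    Measurable (Dfun A h) := by
  apply measurable_slices
  intro r
  have x0 : H → unitInterval := fun _ => 1
  have hrw : (fun x : H → unitInterval => Dfun A h (r, x))
      = fun x => ∏ h' ∈ Finset.univ.filter (fun h' : Option H => Prefers (r, x0) h' h),
          (1 - A h' (priOf (r, x) h')) := rfl
  rw [hrw]
  apply Finset.measurable_prod
  intro h' _
  apply Measurable.const_sub
  cases h' with
  | none =>
    show Measurable fun _ : H → unitInterval => A none 1
    exact measurable_const
  | some k =>
    exact (measurable_of_monotone_uI (hAm (some k))).comp (measurable_pi_apply k)

lemma measurable_matchingOf {A : AdmissionsFun H} (hAm : ∀ h, Monotone (A h)) (h : Option H) :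
    Measurable fun θ => matchingOf A θ h :=
  (measurable_A_pri hAm h).mul (measurable_Dfun hAm h)

lemma integrable_bdd {Ω : Type*} [MeasurableSpace Ω] (η : Measure Ω) [IsFiniteMeasure η]
    {f : Ω → ℝ} (hm : Measurable f) (hb : ∀ ω, |f ω| ≤ 1) : Integrable f η :=
  (integrable_const (1:ℝ)).mono' hm.aestronglyMeasurable
    (Filter.Eventually.of_forall fun ω => by simpa [Real.norm_eq_abs] using hb ω)

lemma matchingOf_none {A : AdmissionsFun H} (hA : ∀ p, A none p = 1) (θ : Student H) :
    matchingOf A θ none = Dfun A none θ := by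
  rw [matchingOf_eq, hA, one_mul]

lemma Dfun_eq_zero {A : AdmissionsFun H} (hA : ∀ p, A none p = 1) {θ : Student H} {h0 : H}
    (hpref : Prefers θ none (some h0)) : Dfun A (some h0) θ = 0 := by
  apply Finset.prod_eq_zero (i := (none : Option H))
  · exact Finset.mem_filter.mpr ⟨Finset.mem_univ _, hpref⟩
  · rw [hA]; ring

lemma pref_of_Dfun_ne_zero {A : AdmissionsFun H} (hA : ∀ p, A none p = 1) {θ : Student H}
    {h0 : H} (hds : Dfun A (some h0) θ ≠ 0) : Prefers θ (some h0) none := by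
  letI := θ.1
  by_contra hnp
  have hne : (some h0 : Option H) ≠ none := by simp
  have : (some h0 : Option H) < none ∨ (some h0 : Option H) > none := lt_or_gt_of_ne hne
  have hlt : (some h0 : Option H) < none := this.resolve_right hnp
  exact hds (Dfun_eq_zero hA hlt)

lemma matchingOf_zero {A : AdmissionsFun H} (hA : ∀ p, A none p = 1) {θ : Student H} {h0 : H}
    (hpref : Prefers θ none (some h0)) : matchingOf A θ (some h0) = 0 := by
  rw [matchingOf_eq, Dfun_eq_zero hA hpref, mul_zero]

lemma sum_some {A : AdmissionsFun H} (hA : ∀ p, A none p = 1) (θ : Student H) :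
    ∑ h0 : H, matchingOf A θ (some h0) = 1 - Dfun A none θ := by
  classical
  letI := θ.1
  have h1 : ∑ o : Option H, matchingOf A θ o
      = matchingOf A θ none + ∑ h0 : H, matchingOf A θ (some h0) := by
    rw [Fintype.sum_option]
  have h2 : ∑ o : Option H, matchingOf A θ o
      = (∑ o ∈ Finset.univ.filter (fun o : Option H => Prefers θ o none), matchingOf A θ o)
        + ∑ o ∈ Finset.univ.filter (fun o : Option H => ¬ Prefers θ o none),
            matchingOf A θ o := by
    rw [Finset.sum_filter_add_sum_filter_not]
  have h3 : ∑ o ∈ Finset.univ.filter (fun o : Option H => ¬ Prefers θ o none),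
      matchingOf A θ o = matchingOf A θ none := by
    apply Finset.sum_eq_single_of_mem
    · exact Finset.mem_filter.mpr ⟨Finset.mem_univ _, lt_irrefl _⟩
    · intro o ho hne
      have hnp : ¬ Prefers θ o none := (Finset.mem_filter.mp ho).2
      obtain ⟨h0, rfl⟩ : ∃ h0 : H, o = some h0 := by
        cases o with
        | none => exact absurd rfl hne
        | some k => exact ⟨k, rfl⟩
      have : (some h0 : Option H) < none ∨ (some h0 : Option H) > none :=
        lt_or_gt_of_ne (by simp)
      exact matchingOf_zero hA (this.resolve_right hnp)
  have h4 := sum_matchingOf A θ none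
  rw [h2, h3, h4] at h1
  linarith

lemma interest_eq (η : Measure (Student H)) (A : AdmissionsFun H) (h : H) (p : unitInterval) :
    interestOf η (matchingOf A) h p
      = ∫ θ, (if p ≤ θ.2 h then (1:ℝ) else 0) * Dfun A (some h) θ ∂η := by
  unfold interestOf
  apply integral_congr_ae
  apply Filter.Eventually.of_forall
  intro θ
  show (if p ≤ θ.2 h then (1:ℝ) else 0) *
      (1 - ∑ h' ∈ Finset.univ.filter (fun h' : Option H => Prefers θ h' (some h)),
        matchingOf A θ h')
    = (if p ≤ θ.2 h then (1:ℝ) else 0) * Dfun A (some h) θ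
  rw [sum_matchingOf]
  ring

section Key

open Set ENNReal

variable {Ω : Type*} [MeasurableSpace Ω]

lemma key (η : Measure Ω) [IsFiniteMeasure η]
    (P D : Ω → ℝ) (hP : Measurable P) (hD : Measurable D)
    (hP0 : ∀ ω, 0 ≤ P ω) (hP1 : ∀ ω, P ω ≤ 1)
    (hD0 : ∀ ω, 0 ≤ D ω) (hD1 : ∀ ω, D ω ≤ 1)
    (hatom : ∀ p : ℝ, η {ω | P ω = p ∧ D ω ≠ 0} = 0)
    (W : ℝ → ℝ) (hW : Antitone W) :
    ∫ ω, W (∫ ω', (if P ω ≤ P ω' then (1:ℝ) else 0) * D ω' ∂η) * D ω ∂η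
      = ∫ t in Set.Ioc (0:ℝ) (∫ ω, D ω ∂η), W t := by
  classical
  set m : ℝ := ∫ ω, D ω ∂η with hm
  have hm0 : 0 ≤ m := integral_nonneg hD0
  set ρ : Measure Ω := η.withDensity (fun ω => ENNReal.ofReal (D ω)) with hρ
  haveI : IsFiniteMeasure ρ := by
    constructor
    rw [hρ, withDensity_apply _ MeasurableSet.univ, Measure.restrict_univ]
    calc ∫⁻ ω, ENNReal.ofReal (D ω) ∂η ≤ ∫⁻ _, 1 ∂η :=
          lintegral_mono fun ω => ENNReal.ofReal_le_one.mpr (hD1 ω)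
      _ = η univ := lintegral_one
      _ < ⊤ := measure_lt_top η univ
  set ν : Measure ℝ := ρ.map P with hν
  haveI : IsFiniteMeasure ν := by
    constructor
    rw [hν, Measure.map_apply hP MeasurableSet.univ]
    exact (measure_mono (Set.subset_univ _)).trans_lt (measure_lt_top ρ univ)
  -- indicator * density integrand
  have hindmeas : ∀ p : ℝ, Measurable fun ω => (if p ≤ P ω then (1:ℝ) else 0) * D ω := by
    intro p
    exact ((measurable_const.ite (measurableSet_le measurable_const hP)
      measurable_const).mul hD)
  have hindbd : ∀ p : ℝ, ∀ ω, |(if p ≤ P ω then (1:ℝ) else 0) * D ω| ≤ 1 := by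
    intro p ω
    rw [abs_mul]
    have h1 : |(if p ≤ P ω then (1:ℝ) else 0)| ≤ 1 := by split <;> simp
    have h2 : |D ω| ≤ 1 := abs_le.mpr ⟨by linarith [hD0 ω], hD1 ω⟩
    calc |(if p ≤ P ω then (1:ℝ) else 0)| * |D ω| ≤ 1 * 1 :=
          mul_le_mul h1 h2 (abs_nonneg _) zero_le_one
      _ = 1 := by ring
  have hindint : ∀ p : ℝ, Integrable (fun ω => (if p ≤ P ω then (1:ℝ) else 0) * D ω) η :=
    fun p => integrable_bdd η (hindmeas p) (hindbd p)
  set F : ℝ → ℝ := fun p => ∫ ω, (if p ≤ P ω then (1:ℝ) else 0) * D ω ∂η with hF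
  have hindnn : ∀ (p : ℝ) ω, 0 ≤ (if p ≤ P ω then (1:ℝ) else 0) * D ω := by
    intro p ω
    by_cases h : p ≤ P ω <;> simp [h, hD0 ω]
  have hF0 : ∀ p, 0 ≤ F p := fun p => integral_nonneg fun ω => hindnn p ω
  -- (a) the measure of upper sets
  have hνIci : ∀ p : ℝ, ν (Ici p) = ENNReal.ofReal (F p) := by
    intro p
    rw [hν, Measure.map_apply hP measurableSet_Ici, hρ,
      withDensity_apply _ (hP measurableSet_Ici)]
    rw [hF]
    rw [ofReal_integral_eq_lintegral_ofReal (hindint p)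
      (Filter.Eventually.of_forall fun ω => hindnn p ω)]
    rw [← lintegral_indicator (hP measurableSet_Ici)]
    congr 1
    funext ω
    by_cases h : p ≤ P ω <;>
      simp [Set.indicator, Set.mem_preimage, Set.mem_Ici, h]
  have hDint : Integrable D η :=
    integrable_bdd η hD fun ω => abs_le.mpr ⟨by linarith [hD0 ω], hD1 ω⟩
  have hνuniv : ν univ = ENNReal.ofReal m := by
    rw [hν, Measure.map_apply hP MeasurableSet.univ, Set.preimage_univ, hρ,
      withDensity_apply _ MeasurableSet.univ, Measure.restrict_univ, hm]
    rw [ofReal_integral_eq_lintegral_ofReal hDint (Filter.Eventually.of_forall hD0)]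
  haveI : NullSingletonClass ν := by
    constructor
    intro p
    rw [hν, Measure.map_apply hP (measurableSet_singleton p), hρ,
      withDensity_apply _ (hP (measurableSet_singleton p)),
      ← lintegral_indicator (hP (measurableSet_singleton p))]
    have hzero : (fun ω => (P ⁻¹' {p}).indicator (fun ω => ENNReal.ofReal (D ω)) ω)
        =ᵐ[η] 0 := by
      rw [Filter.EventuallyEq, ae_iff]
      apply measure_mono_null _ (hatom p)
      intro ω hω
      simp only [Set.mem_setOf_eq] at hω ⊢
      by_cases hp : P ω = p
      · refine ⟨hp, fun hd => hω ?_⟩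
        simp [Set.indicator, Set.mem_preimage, hp, hd]
      · exact absurd (by simp [Set.indicator, Set.mem_preimage, hp]) hω
    rw [lintegral_congr_ae hzero]
    simp
  -- the decreasing rescaled cdf
  set G : ℝ → ℝ := fun p => (ν (Ici p)).toReal with hG
  have hGF : ∀ p, G p = F p := fun p => by
    simp only [hG]
    rw [hνIci p, ENNReal.toReal_ofReal (hF0 p)]
  have hGanti : Antitone G := fun p q hpq =>
    ENNReal.toReal_mono (measure_ne_top ν _) (measure_mono (Ici_subset_Ici.mpr hpq))
  have hGmeas : Measurable G := hGanti.measurable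
  have hGnn : ∀ p, 0 ≤ G p := fun p => ENNReal.toReal_nonneg
  have hGle : ∀ p, G p ≤ m := fun p => by
    have h1 : ν (Ici p) ≤ ν univ := measure_mono (Set.subset_univ _)
    have := ENNReal.toReal_mono (measure_ne_top ν univ) h1
    rwa [hνuniv, ENNReal.toReal_ofReal hm0] at this
  have hν2 : ν (Ici 2) = 0 := by
    rw [hν, Measure.map_apply hP measurableSet_Ici]
    have : P ⁻¹' (Ici 2) = ∅ := by
      ext ω; simp only [Set.mem_preimage, Set.mem_Ici, Set.mem_empty_iff_false, iff_false]
      intro h; linarith [hP1 ω]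
    rw [this, measure_empty]
  have hGlow : ∀ p : ℝ, p ≤ 0 → G p = m := by
    intro p hp
    have hIio : ν (Iio p) = 0 := by
      rw [hν, Measure.map_apply hP measurableSet_Iio]
      have : P ⁻¹' (Iio p) = ∅ := by
        ext ω; simp only [Set.mem_preimage, Set.mem_Iio, Set.mem_empty_iff_false, iff_false]
        intro h; linarith [hP0 ω]
      rw [this, measure_empty]
    have huniv : ν (Ici p) = ν univ := by
      have : ν (Iio p ∪ Ici p) = ν (Iio p) + ν (Ici p) :=
        measure_union (Set.Iio_disjoint_Ici (le_refl p)) measurableSet_Ici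
      rw [Set.Iio_union_Ici] at this
      rw [this, hIio, zero_add]
    simp only [hG]
    rw [huniv, hνuniv, ENNReal.toReal_ofReal hm0]
  -- conversion of integrals against ν
  have hconv : ∀ f : ℝ → ℝ, Measurable f →
      ∫ x, f x ∂ν = ∫ ω, f (P ω) * D ω ∂η := by
    intro f hf
    rw [hν, integral_map hP.aemeasurable hf.aestronglyMeasurable, hρ]
    have hofReal : (fun ω => ENNReal.ofReal (D ω))
        = fun ω => ((fun ω => (D ω).toNNReal) ω : ℝ≥0∞) := rfl
    rw [hofReal, integral_withDensity_eq_integral_smul (hD.real_toNNReal)]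
    apply integral_congr_ae
    apply Filter.Eventually.of_forall
    intro ω
    show (D ω).toNNReal • f (P ω) = f (P ω) * D ω
    rw [NNReal.smul_def, Real.coe_toNNReal _ (hD0 ω), smul_eq_mul, mul_comm]
  -- the pushforward of ν under G is Lebesgue on (0, m]
  have hmap : ν.map G = (volume : Measure ℝ).restrict (Set.Ioc 0 m) := by
    haveI : IsFiniteMeasure (ν.map G) := by
      constructor
      rw [Measure.map_apply hGmeas MeasurableSet.univ]
      exact (measure_mono (Set.subset_univ _)).trans_lt (measure_lt_top ν univ)
    apply MeasureTheory.Measure.ext_of_Iic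
    intro c
    rw [Measure.map_apply hGmeas measurableSet_Iic,
      Measure.restrict_apply measurableSet_Iic]
    have hpre : G ⁻¹' (Iic c) = {p : ℝ | G p ≤ c} := rfl
    rw [hpre]
    rcases le_or_gt m c with hmc | hcm
    · -- m ≤ c : everything
      have hset : {p : ℝ | G p ≤ c} = univ :=
        Set.eq_univ_of_forall fun p => (hGle p).trans hmc
      have hset2 : Iic c ∩ Ioc 0 m = Ioc 0 m :=
        Set.inter_eq_self_of_subset_right fun x hx => le_trans hx.2 hmc
      rw [hset, hset2, hνuniv, Real.volume_Ioc, sub_zero]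
    · rcases lt_or_ge c 0 with hc0 | hc0
      · -- c < 0 : empty
        have hset : {p : ℝ | G p ≤ c} = ∅ := by
          ext p
          simp only [Set.mem_setOf_eq, Set.mem_empty_iff_false, iff_false, not_le]
          exact lt_of_lt_of_le hc0 (hGnn p)
        have hset2 : Iic c ∩ Ioc 0 m = ∅ := by
          apply Set.eq_empty_iff_forall_notMem.mpr
          rintro x ⟨(hx1 : x ≤ c), (hx2 : 0 < x), -⟩
          linarith
        rw [hset, hset2, measure_empty, measure_empty]
      · -- 0 ≤ c < m
        set U := {p : ℝ | G p ≤ c} with hU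
        have hUpos : ∀ p ∈ U, (0:ℝ) ≤ p := by
          intro p hp
          by_contra hneg
          push_neg at hneg
          have := hGlow p hneg.le
          have : m ≤ c := by rw [← this]; exact hp
          linarith
        have hUne : (2:ℝ) ∈ U := by
          show G 2 ≤ c
          have : G 2 = 0 := by simp only [hG]; rw [hν2]; simp
          linarith
        have hUbdd : BddBelow U := ⟨0, fun p hp => hUpos p hp⟩
        set q := sInf U with hq
        have hq_le : ∀ p ∈ U, q ≤ p := fun p hp => csInf_le hUbdd hp
        have hq_up : ∀ p, q < p → p ∈ U := by
          intro p hp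
          obtain ⟨u, huU, hup⟩ := exists_lt_of_csInf_lt ⟨2, hUne⟩ hp
          show G p ≤ c
          exact le_trans (hGanti hup.le) huU
        have hIoiIci : ν (Ioi q) = ν (Ici q) := measure_congr Ioi_ae_eq_Ici
        have hνU : ν U = ν (Ici q) := by
          apply le_antisymm
          · exact measure_mono fun p hp => hq_le p hp
          · rw [← hIoiIci]
            exact measure_mono fun p hp => hq_up p hp
        have hνIciG : ∀ p : ℝ, ν (Ici p) = ENNReal.ofReal (G p) := by
          intro p
          rw [hνIci p, hGF p]
        have hub : ν (Ici q) ≤ ENNReal.ofReal c := by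
          rw [← hIoiIci]
          have hUnion : Ioi q = ⋃ n : ℕ, Ici (q + 1/(n+1)) := by
            ext x
            simp only [Set.mem_Ioi, Set.mem_iUnion, Set.mem_Ici]
            constructor
            · intro hx
              obtain ⟨n, hn⟩ := exists_nat_one_div_lt (sub_pos.mpr hx)
              exact ⟨n, by push_cast at hn ⊢; linarith⟩
            · rintro ⟨n, hn⟩
              have h1 : (0:ℝ) < 1/((n:ℝ)+1) := by positivity
              linarith
          rw [hUnion]
          have hmono : Monotone fun n : ℕ => Ici (q + 1/((n:ℝ)+1)) := by
            intro a b hab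
            apply Set.Ici_subset_Ici.mpr
            have : 1/((b:ℝ)+1) ≤ 1/((a:ℝ)+1) := by
              apply one_div_le_one_div_of_le
              · positivity
              · push_cast; linarith [(Nat.cast_le (α := ℝ)).mpr hab]
            linarith
          rw [Directed.measure_iUnion hmono.directed_le]
          apply iSup_le
          intro n
          have hmem : q + 1/((n:ℝ)+1) ∈ U := by
            apply hq_up
            have : (0:ℝ) < 1/((n:ℝ)+1) := by positivity
            linarith
          rw [hνIciG]
          exact ENNReal.ofReal_le_ofReal hmem
        have hlb : ENNReal.ofReal c ≤ ν (Ici q) := by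
          rcases le_or_gt q 0 with hq0 | hq0
          · rw [hνIciG, hGlow q hq0]
            exact ENNReal.ofReal_le_ofReal hcm.le
          · have hInter : Ici q = ⋂ n : ℕ, Ici (q - 1/(n+1)) := by
              ext x
              simp only [Set.mem_Ici, Set.mem_iInter]
              constructor
              · intro hx n
                have : (0:ℝ) < 1/((n:ℝ)+1) := by positivity
                linarith
              · intro hx
                by_contra hlt
                push_neg at hlt
                obtain ⟨n, hn⟩ := exists_nat_one_div_lt (sub_pos.mpr hlt)
                have := hx n
                push_cast at hn this
                linarith
            have hanti : Antitone fun n : ℕ => Ici (q - 1/((n:ℝ)+1)) := by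
              intro a b hab
              apply Set.Ici_subset_Ici.mpr
              have : 1/((b:ℝ)+1) ≤ 1/((a:ℝ)+1) := by
                apply one_div_le_one_div_of_le
                · positivity
                · push_cast; linarith [(Nat.cast_le (α := ℝ)).mpr hab]
              linarith
            rw [hInter, Directed.measure_iInter
              (fun n => measurableSet_Ici.nullMeasurableSet)
              hanti.directed_ge ⟨0, measure_ne_top ν _⟩]
            apply le_iInf
            intro n
            have hnot : q - 1/((n:ℝ)+1) ∉ U := by
              intro hmem
              have := hq_le _ hmem
              have hpos : (0:ℝ) < 1/((n:ℝ)+1) := by positivity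
              linarith
            have : c < G (q - 1/((n:ℝ)+1)) := lt_of_not_ge hnot
            rw [hνIciG]
            exact ENNReal.ofReal_le_ofReal this.le
        have hici : ν (Ici q) = ENNReal.ofReal c := le_antisymm hub hlb
        have hset2 : Iic c ∩ Ioc 0 m = Ioc 0 c := by
          ext x
          simp only [Set.mem_inter_iff, Set.mem_Iic, Set.mem_Ioc]
          constructor
          · rintro ⟨h1, h2, h3⟩; exact ⟨h2, h1⟩
          · rintro ⟨h1, h2⟩; exact ⟨h2, h1, by linarith⟩
        rw [hνU, hici, hset2, Real.volume_Ioc, sub_zero]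
  -- put the pieces together
  have hWmeas : Measurable W := hW.measurable
  have step1 : ∫ ω, W (∫ ω', (if P ω ≤ P ω' then (1:ℝ) else 0) * D ω' ∂η) * D ω ∂η
      = ∫ ω, (W ∘ G) (P ω) * D ω ∂η := by
    apply integral_congr_ae
    apply Filter.Eventually.of_forall
    intro ω
    show W (∫ ω', (if P ω ≤ P ω' then (1:ℝ) else 0) * D ω' ∂η) * D ω
      = (W ∘ G) (P ω) * D ω
    rw [Function.comp_apply, hGF (P ω)]
  rw [step1, ← hconv (W ∘ G) (hWmeas.comp hGmeas)]
  simp only [Function.comp_apply]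
  rw [← integral_map hGmeas.aemeasurable hWmeas.aestronglyMeasurable, hmap]


end Key

section Comp

variable (V : ℝ → ℕ → ℝ) (C : H → ℕ)

lemma enrollment_formula
    (hVrange : ∀ (x : ℝ) (c : ℕ), 0 ≤ x → V x c ∈ Set.Icc (0:ℝ) 1)
    (hVmono : ∀ (c : ℕ) (x y : ℝ), 0 ≤ x → x ≤ y → V y c ≤ V x c)
    (η : Measure (Student H)) [IsFiniteMeasure η] (hη : StrictPriorities η)
    (X : AdmissionsFun H) (hX : IsAdmissionsFun X)
    (hfix : X = admissionsOf V C (interestOf η (matchingOf X))) (h0 : H) :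
    ∫ θ, matchingOf X θ (some h0) ∂η
      = ∫ t in Set.Ioc (0:ℝ) (∫ θ, Dfun X (some h0) θ ∂η), V (max t 0) (C h0) := by
  classical
  have hX0 : ∀ h p, 0 ≤ X h p := fun h p => ((hX.1 h).2 p).1
  have hX1 : ∀ h p, X h p ≤ 1 := fun h p => ((hX.1 h).2 p).2
  have hXm : ∀ h, Monotone (X h) := fun h => (hX.1 h).1
  have hXnone : ∀ p, X none p = 1 := hX.2
  set P : Student H → ℝ := fun θ => (θ.2 h0 : ℝ) with hP
  set DD : Student H → ℝ := Dfun X (some h0) with hDD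
  have hPmeas : Measurable P := measurable_subtype_coe.comp
    ((measurable_pi_apply h0).comp measurable_snd)
  have hDmeas : Measurable DD := measurable_Dfun hXm (some h0)
  have hP0 : ∀ θ, 0 ≤ P θ := fun θ => (θ.2 h0).2.1
  have hP1 : ∀ θ, P θ ≤ 1 := fun θ => (θ.2 h0).2.2
  have hD0 : ∀ θ, 0 ≤ DD θ := fun θ => Dfun_nonneg hX1 _ θ
  have hD1 : ∀ θ, DD θ ≤ 1 := fun θ => Dfun_le_one hX0 hX1 _ θ
  have hatom : ∀ p : ℝ, η {θ | P θ = p ∧ DD θ ≠ 0} = 0 := by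
    intro p
    by_cases hp : 0 ≤ p ∧ p ≤ 1
    · set pu : unitInterval := ⟨p, hp.1, hp.2⟩ with hpu
      apply measure_mono_null _ (hη h0 pu)
      rintro θ ⟨hPθ, hDθ⟩
      refine ⟨pref_of_Dfun_ne_zero hXnone hDθ, ?_⟩
      apply Subtype.ext
      exact hPθ
    · have : {θ : Student H | P θ = p ∧ DD θ ≠ 0} = ∅ := by
        apply Set.eq_empty_iff_forall_notMem.mpr
        rintro θ ⟨hPθ, -⟩
        exact hp (hPθ ▸ ⟨(θ.2 h0).2.1, (θ.2 h0).2.2⟩)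
      rw [this, measure_empty]
  set W : ℝ → ℝ := fun t => V (max t 0) (C h0) with hW
  have hWanti : Antitone W := by
    intro t s hts
    exact hVmono (C h0) (max t 0) (max s 0) (le_max_right t 0)
      (max_le_max hts le_rfl)
  have hkey := key η P DD hPmeas hDmeas hP0 hP1 hD0 hD1 hatom W hWanti
  -- identify the left-hand sides
  have hIval : ∀ p : unitInterval, interestOf η (matchingOf X) h0 p
      = ∫ θ', (if (p : ℝ) ≤ P θ' then (1:ℝ) else 0) * DD θ' ∂η := by
    intro p
    rw [interest_eq]
    apply integral_congr_ae
    apply Filter.Eventually.of_forall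
    intro θ'
    have h : (p ≤ θ'.2 h0) = ((p:ℝ) ≤ P θ') := by
      simp [hP, Subtype.coe_le_coe]
    show (if p ≤ θ'.2 h0 then (1:ℝ) else 0) * Dfun X (some h0) θ'
      = (if (p:ℝ) ≤ P θ' then (1:ℝ) else 0) * DD θ'
    have h2 : (if p ≤ θ'.2 h0 then (1:ℝ) else 0) = (if (p:ℝ) ≤ P θ' then (1:ℝ) else 0) :=
      if_congr (iff_of_eq h) rfl rfl
    rw [h2, hDD]
  have hXval : ∀ p : unitInterval, X (some h0) p
      = V (interestOf η (matchingOf X) h0 p) (C h0) := by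
    intro p
    conv_lhs => rw [hfix]
    rfl
  have hInn : ∀ p : unitInterval, 0 ≤ interestOf η (matchingOf X) h0 p := by
    intro p
    rw [hIval]
    apply integral_nonneg
    intro θ'
    by_cases h : (p:ℝ) ≤ P θ' <;> simp [h, hD0 θ']
  have hlhs : ∫ θ, matchingOf X θ (some h0) ∂η
      = ∫ θ, W (∫ θ', (if P θ ≤ P θ' then (1:ℝ) else 0) * DD θ' ∂η) * DD θ ∂η := by
    apply integral_congr_ae
    apply Filter.Eventually.of_forall
    intro θ
    show matchingOf X θ (some h0)
      = W (∫ θ', (if P θ ≤ P θ' then (1:ℝ) else 0) * DD θ' ∂η) * DD θ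
    rw [matchingOf_eq]
    congr 1
    have hpri : priOf θ (some h0) = θ.2 h0 := rfl
    rw [hpri, hXval (θ.2 h0)]
    have h1 : interestOf η (matchingOf X) h0 (θ.2 h0)
        = ∫ θ', (if P θ ≤ P θ' then (1:ℝ) else 0) * DD θ' ∂η := hIval (θ.2 h0)
    rw [← h1]
    show V (interestOf η (matchingOf X) h0 (θ.2 h0)) (C h0)
      = V (max (interestOf η (matchingOf X) h0 (θ.2 h0)) 0) (C h0)
    rw [max_eq_left (hInn (θ.2 h0))]
  rw [hlhs, hkey]

lemma matching_bd {X : AdmissionsFun H} (hX0 : ∀ h p, 0 ≤ X h p) (hX1 : ∀ h p, X h p ≤ 1)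
    (h : Option H) (θ : Student H) : |matchingOf X θ h| ≤ 1 := by
  rw [matchingOf_eq, abs_mul]
  have h1 : |X h (priOf θ h)| ≤ 1 := abs_le.mpr ⟨by linarith [hX0 h (priOf θ h)], hX1 h _⟩
  have h2 : |Dfun X h θ| ≤ 1 := abs_le.mpr
    ⟨by linarith [Dfun_nonneg hX1 h θ], Dfun_le_one hX0 hX1 h θ⟩
  calc |X h (priOf θ h)| * |Dfun X h θ| ≤ 1 * 1 :=
        mul_le_mul h1 h2 (abs_nonneg _) zero_le_one
    _ = 1 := by ring

lemma total_eq (η : Measure (Student H)) [IsFiniteMeasure η]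
    {X : AdmissionsFun H} (hX : IsAdmissionsFun X) :
    ∫ θ, (1 - Dfun X none θ) ∂η = ∑ h0 : H, ∫ θ, matchingOf X θ (some h0) ∂η := by
  classical
  have hX0 : ∀ h p, 0 ≤ X h p := fun h p => ((hX.1 h).2 p).1
  have hX1 : ∀ h p, X h p ≤ 1 := fun h p => ((hX.1 h).2 p).2
  have hXm : ∀ h, Monotone (X h) := fun h => (hX.1 h).1
  have h1 : ∫ θ, (1 - Dfun X none θ) ∂η = ∫ θ, ∑ h0 : H, matchingOf X θ (some h0) ∂η := by
    apply integral_congr_ae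
    apply Filter.Eventually.of_forall
    intro θ
    show 1 - Dfun X none θ = ∑ h0 : H, matchingOf X θ (some h0)
    rw [sum_some hX.2 θ]
  rw [h1]
  apply integral_finset_sum
  intro h0 _
  exact integrable_bdd η (measurable_matchingOf hXm (some h0)) (matching_bd hX0 hX1 (some h0))

lemma comparable
    (hVrange : ∀ (x : ℝ) (c : ℕ), 0 ≤ x → V x c ∈ Set.Icc (0:ℝ) 1)
    (hVmono : ∀ (c : ℕ) (x y : ℝ), 0 ≤ x → x ≤ y → V y c ≤ V x c)
    (η : Measure (Student H)) [IsFiniteMeasure η] (hη : StrictPriorities η)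
    (A B : AdmissionsFun H) (hA : IsAdmissionsFun A) (hB : IsAdmissionsFun B)
    (hfixA : A = admissionsOf V C (interestOf η (matchingOf A)))
    (hfixB : B = admissionsOf V C (interestOf η (matchingOf B)))
    (hle : ∀ h p, A h p ≤ B h p) :
    (∀ h : Option H, ∫ θ, matchingOf A θ h ∂η = ∫ θ, matchingOf B θ h ∂η) ∧
    (∀ᵐ θ ∂η, Dfun A none θ = Dfun B none θ) := by
  classical
  have hA0 : ∀ h p, 0 ≤ A h p := fun h p => ((hA.1 h).2 p).1
  have hA1 : ∀ h p, A h p ≤ 1 := fun h p => ((hA.1 h).2 p).2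
  have hAm : ∀ h, Monotone (A h) := fun h => (hA.1 h).1
  have hB0 : ∀ h p, 0 ≤ B h p := fun h p => ((hB.1 h).2 p).1
  have hB1 : ∀ h p, B h p ≤ 1 := fun h p => ((hB.1 h).2 p).2
  have hBm : ∀ h, Monotone (B h) := fun h => (hB.1 h).1
  -- integrability of the Dfuns
  have hDintA : ∀ h, Integrable (Dfun A h) η := fun h =>
    integrable_bdd η (measurable_Dfun hAm h) fun θ => abs_le.mpr
      ⟨by linarith [Dfun_nonneg hA1 h θ], Dfun_le_one hA0 hA1 h θ⟩
  have hDintB : ∀ h, Integrable (Dfun B h) η := fun h =>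
    integrable_bdd η (measurable_Dfun hBm h) fun θ => abs_le.mpr
      ⟨by linarith [Dfun_nonneg hB1 h θ], Dfun_le_one hB0 hB1 h θ⟩
  -- masses
  have hDle : ∀ h θ, Dfun B h θ ≤ Dfun A h θ := fun h θ => Dfun_anti hB1 hle h θ
  have hmle : ∀ h0 : H, ∫ θ, Dfun B (some h0) θ ∂η ≤ ∫ θ, Dfun A (some h0) θ ∂η :=
    fun h0 => integral_mono (hDintB _) (hDintA _) (fun θ => hDle _ θ)
  have hm0 : ∀ h0 : H, 0 ≤ ∫ θ, Dfun B (some h0) θ ∂η :=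
    fun h0 => integral_nonneg fun θ => Dfun_nonneg hB1 _ θ
  -- per-school enrollment comparison
  have hWanti : ∀ h0 : H, Antitone (fun t : ℝ => V (max t 0) (C h0)) := by
    intro h0 t s hts
    exact hVmono (C h0) (max t 0) (max s 0) (le_max_right t 0) (max_le_max hts le_rfl)
  have hW0 : ∀ (h0 : H) (t : ℝ), 0 ≤ V (max t 0) (C h0) :=
    fun h0 t => (hVrange _ _ (le_max_right t 0)).1
  have hW1 : ∀ (h0 : H) (t : ℝ), V (max t 0) (C h0) ≤ 1 :=
    fun h0 t => (hVrange _ _ (le_max_right t 0)).2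
  have hEle : ∀ h0 : H, ∫ θ, matchingOf B θ (some h0) ∂η ≤ ∫ θ, matchingOf A θ (some h0) ∂η := by
    intro h0
    rw [enrollment_formula V C hVrange hVmono η hη A hA hfixA h0,
      enrollment_formula V C hVrange hVmono η hη B hB hfixB h0]
    haveI : IsFiniteMeasure ((volume : Measure ℝ).restrict
        (Set.Ioc 0 (∫ θ, Dfun A (some h0) θ ∂η))) := by
      constructor
      rw [Measure.restrict_apply_univ, Real.volume_Ioc]
      exact ENNReal.ofReal_lt_top
    apply setIntegral_mono_set
    · exact integrable_bdd _ ((hWanti h0).measurable) fun t => abs_le.mpr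
        ⟨by linarith [hW0 h0 t], hW1 h0 t⟩
    · exact Filter.Eventually.of_forall fun t => hW0 h0 t
    · exact HasSubset.Subset.eventuallyLE (Set.Ioc_subset_Ioc_right (hmle h0))
  -- totals
  have htot : ∫ θ, (1 - Dfun A none θ) ∂η ≤ ∫ θ, (1 - Dfun B none θ) ∂η := by
    apply integral_mono
    · exact (integrable_const (1:ℝ)).sub (hDintA none)
    · exact (integrable_const (1:ℝ)).sub (hDintB none)
    · intro θ
      have := hDle none θ
      simp only [Pi.sub_apply]
      linarith [hDle none θ]
  rw [total_eq η hA, total_eq η hB] at htot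
  have hsums : ∑ h0 : H, ∫ θ, matchingOf B θ (some h0) ∂η
      = ∑ h0 : H, ∫ θ, matchingOf A θ (some h0) ∂η := by
    apply le_antisymm
    · exact Finset.sum_le_sum fun h0 _ => hEle h0
    · exact htot
  have hEeq : ∀ h0 : H, ∫ θ, matchingOf A θ (some h0) ∂η
      = ∫ θ, matchingOf B θ (some h0) ∂η := by
    have := (Finset.sum_eq_sum_iff_of_le (fun h0 (_ : h0 ∈ Finset.univ) => hEle h0)).mp hsums
    intro h0
    exact (this h0 (Finset.mem_univ h0)).symm
  -- back to the totals: equality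
  have htoteq : ∫ θ, (1 - Dfun A none θ) ∂η = ∫ θ, (1 - Dfun B none θ) ∂η := by
    rw [total_eq η hA, total_eq η hB]
    exact Finset.sum_congr rfl fun h0 _ => hEeq h0
  have hDnoneeq : ∫ θ, Dfun A none θ ∂η = ∫ θ, Dfun B none θ ∂η := by
    have h1 : ∫ θ, (1 - Dfun A none θ) ∂η
        = (∫ _, (1:ℝ) ∂η) - ∫ θ, Dfun A none θ ∂η :=
      integral_sub (integrable_const 1) (hDintA none)
    have h2 : ∫ θ, (1 - Dfun B none θ) ∂η
        = (∫ _, (1:ℝ) ∂η) - ∫ θ, Dfun B none θ ∂η :=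
      integral_sub (integrable_const 1) (hDintB none)
    rw [h1, h2] at htoteq
    linarith
  constructor
  · intro h
    cases h with
    | none =>
      have ha : ∀ θ, matchingOf A θ none = Dfun A none θ := matchingOf_none hA.2
      have hb : ∀ θ, matchingOf B θ none = Dfun B none θ := matchingOf_none hB.2
      rw [integral_congr_ae (Filter.Eventually.of_forall ha),
        integral_congr_ae (Filter.Eventually.of_forall hb)]
      exact hDnoneeq
    | some h0 => exact hEeq h0
  · -- a.e. equality of the none-Dfuns
    have hga : Integrable (fun θ => Dfun A none θ - Dfun B none θ) η :=
      (hDintA none).sub (hDintB none)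
    have hg0 : (0 : Student H → ℝ) ≤ fun θ => Dfun A none θ - Dfun B none θ := by
      intro θ
      simp only [Pi.zero_apply]
      linarith [hDle none θ]
    have hgint : ∫ θ, (Dfun A none θ - Dfun B none θ) ∂η = 0 := by
      rw [integral_sub (hDintA none) (hDintB none), hDnoneeq]
      ring
    have := (integral_eq_zero_iff_of_nonneg hg0 hga).mp hgint
    filter_upwards [this] with θ hθ
    have : Dfun A none θ - Dfun B none θ = 0 := hθ
    linarith

end Comp

section Lattice

instance : Fact ((0:ℝ) ≤ 1) := ⟨zero_le_one⟩

variable (V : ℝ → ℕ → ℝ) (C : H → ℕ) (η : Measure (Student H)) [IsFiniteMeasure η]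

/-- Bundled admissions functions: our complete lattice. -/
abbrev LA (H : Type*) := Option H → (unitInterval → unitInterval)

def toAdm (𝔄 : LA H) : AdmissionsFun H := fun h p => ((𝔄 h) p : ℝ)

lemma toAdm_mono {𝔄 : LA H} {h : Option H} (hm : Monotone (𝔄 h)) : Monotone (toAdm 𝔄 h) :=
  fun p q hpq => Subtype.coe_le_coe.mpr (hm hpq)

lemma toAdm_mem (𝔄 : LA H) (h : Option H) (p : unitInterval) :
    toAdm 𝔄 h p ∈ Set.Icc (0:ℝ) 1 := (𝔄 h p).2

lemma measurable_ind (h : H) (p : unitInterval) :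
    Measurable fun θ : Student H => (if p ≤ θ.2 h then (1:ℝ) else 0) := by
  have hset : MeasurableSet {θ : Student H | p ≤ θ.2 h} := by
    have h1 : {θ : Student H | p ≤ θ.2 h}
        = (fun θ : Student H => (θ.2 h : ℝ)) ⁻¹' (Set.Ici (p:ℝ)) := by
      ext θ
      simp [Set.mem_preimage, Set.mem_Ici, Subtype.coe_le_coe]
    rw [h1]
    exact (measurable_subtype_coe.comp ((measurable_pi_apply h).comp measurable_snd))
      measurableSet_Ici
  exact measurable_const.ite hset measurable_const

lemma interest_integrable {X : AdmissionsFun H} (hX0 : ∀ h p, 0 ≤ X h p)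
    (hX1 : ∀ h p, X h p ≤ 1) (hXm : ∀ h, Monotone (X h)) (h : H) (p : unitInterval) :
    Integrable (fun θ => (if p ≤ θ.2 h then (1:ℝ) else 0) * Dfun X (some h) θ) η := by
  apply integrable_bdd η ((measurable_ind h p).mul (measurable_Dfun hXm (some h)))
  intro θ
  rw [Pi.mul_apply, abs_mul]
  have h1 : |(if p ≤ θ.2 h then (1:ℝ) else 0)| ≤ 1 := by split <;> simp
  have h2 : |Dfun X (some h) θ| ≤ 1 := abs_le.mpr
    ⟨by linarith [Dfun_nonneg hX1 (some h) θ], Dfun_le_one hX0 hX1 (some h) θ⟩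
  calc |(if p ≤ θ.2 h then (1:ℝ) else 0)| * |Dfun X (some h) θ| ≤ 1 * 1 :=
        mul_le_mul h1 h2 (abs_nonneg _) zero_le_one
    _ = 1 := by ring

lemma interest_nonneg {X : AdmissionsFun H} (hX1 : ∀ h p, X h p ≤ 1) (h : H)
    (p : unitInterval) : 0 ≤ interestOf η (matchingOf X) h p := by
  rw [interest_eq]
  apply integral_nonneg
  intro θ
  have := Dfun_nonneg hX1 (some h) θ
  by_cases hc : p ≤ θ.2 h <;> simp [hc] <;> linarith

lemma interest_anti {X : AdmissionsFun H} (hX0 : ∀ h p, 0 ≤ X h p)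
    (hX1 : ∀ h p, X h p ≤ 1) (hXm : ∀ h, Monotone (X h)) (h : H) :
    Antitone (fun p => interestOf η (matchingOf X) h p) := by
  intro p q hpq
  show interestOf η (matchingOf X) h q ≤ interestOf η (matchingOf X) h p
  rw [interest_eq, interest_eq]
  apply integral_mono (interest_integrable η hX0 hX1 hXm h q)
    (interest_integrable η hX0 hX1 hXm h p)
  intro θ
  have hD := Dfun_nonneg hX1 (some h) θ
  by_cases hc : q ≤ θ.2 h
  · have hc' : p ≤ θ.2 h := le_trans hpq hc
    simp [hc, hc']
  · simp [hc, hD]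
    by_cases hc' : p ≤ θ.2 h <;> simp [hc', hD]

lemma interest_mono_X {X Y : AdmissionsFun H} (hY1 : ∀ h p, Y h p ≤ 1)
    (hX0 : ∀ h p, 0 ≤ X h p) (hX1 : ∀ h p, X h p ≤ 1) (hXm : ∀ h, Monotone (X h))
    (hY0 : ∀ h p, 0 ≤ Y h p) (hYm : ∀ h, Monotone (Y h))
    (hle : ∀ h p, X h p ≤ Y h p) (h : H) (p : unitInterval) :
    interestOf η (matchingOf Y) h p ≤ interestOf η (matchingOf X) h p := by
  rw [interest_eq, interest_eq]
  apply integral_mono (interest_integrable η hY0 hY1 hYm h p)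
    (interest_integrable η hX0 hX1 hXm h p)
  intro θ
  have hD := Dfun_anti hY1 hle (some h) θ
  by_cases hc : p ≤ θ.2 h <;> simp [hc, hD]

variable (hVrange : ∀ (x : ℝ) (c : ℕ), 0 ≤ x → V x c ∈ Set.Icc (0:ℝ) 1)
variable (hVmono : ∀ (c : ℕ) (x y : ℝ), 0 ≤ x → x ≤ y → V y c ≤ V x c)

/-- The stability operator on bundled admissions functions. -/
def TF (𝔄 : LA H) : LA H := fun h p =>
  ⟨admissionsOf V C (interestOf η (matchingOf (toAdm 𝔄))) h p, by
    cases h with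
    | none => exact ⟨zero_le_one, le_refl 1⟩
    | some h0 =>
      exact hVrange _ _ (interest_nonneg η (fun h p => (toAdm_mem 𝔄 h p).2) h0 p)⟩

lemma toAdm_TF (𝔄 : LA H) :
    toAdm (TF V C η hVrange 𝔄)
      = admissionsOf V C (interestOf η (matchingOf (toAdm 𝔄))) := rfl

include hVmono in
lemma TF_monocomp (𝔄 : LA H) (hm : ∀ h, Monotone (𝔄 h)) (h : Option H) :
    Monotone (TF V C η hVrange 𝔄 h) := by
  intro p q hpq
  rw [Subtype.mk_le_mk]
  cases h with
  | none => exact le_refl 1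
  | some h0 =>
    show V (interestOf η (matchingOf (toAdm 𝔄)) h0 p) (C h0)
      ≤ V (interestOf η (matchingOf (toAdm 𝔄)) h0 q) (C h0)
    exact hVmono (C h0) _ _
      (interest_nonneg η (fun h p => (toAdm_mem 𝔄 h p).2) h0 q)
      (interest_anti η (fun h p => (toAdm_mem 𝔄 h p).1)
        (fun h p => (toAdm_mem 𝔄 h p).2) (fun h => toAdm_mono (hm h)) h0 hpq)

include hVmono in
lemma TF_mono {𝔄 𝔅 : LA H} (hm𝔄 : ∀ h, Monotone (𝔄 h)) (hm𝔅 : ∀ h, Monotone (𝔅 h))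
    (hle : 𝔄 ≤ 𝔅) : TF V C η hVrange 𝔄 ≤ TF V C η hVrange 𝔅 := by
  intro h p
  rw [Subtype.mk_le_mk]
  cases h with
  | none => exact le_refl 1
  | some h0 =>
    show V (interestOf η (matchingOf (toAdm 𝔄)) h0 p) (C h0)
      ≤ V (interestOf η (matchingOf (toAdm 𝔅)) h0 p) (C h0)
    apply hVmono (C h0) _ _
      (interest_nonneg η (fun h p => (toAdm_mem 𝔅 h p).2) h0 p)
    apply interest_mono_X η (fun h p => (toAdm_mem 𝔅 h p).2)
      (fun h p => (toAdm_mem 𝔄 h p).1) (fun h p => (toAdm_mem 𝔄 h p).2)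
      (fun h => toAdm_mono (hm𝔄 h)) (fun h p => (toAdm_mem 𝔅 h p).1)
      (fun h => toAdm_mono (hm𝔅 h))
    exact fun h p => Subtype.coe_le_coe.mpr (hle h p)

include hVmono in
/-- Knaster–Tarski: a largest fixed point of `TF` among componentwise monotone elements. -/
lemma tarski : ∃ g : LA H, (∀ h, Monotone (g h)) ∧ TF V C η hVrange g = g ∧
    ∀ X : LA H, (∀ h, Monotone (X h)) → X ≤ TF V C η hVrange X → X ≤ g := by
  classical
  set S : Set (LA H) :=
    {a | (∀ h, Monotone (a h)) ∧ a ≤ TF V C η hVrange a} with hS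
  set g : LA H := sSup S with hg
  have happ : ∀ (h : Option H) (p : unitInterval), g h p = ⨆ f : S, (f : LA H) h p := by
    intro h p
    rw [hg]
    rw [sSup_apply, iSup_apply]
  have hgmono : ∀ h, Monotone (g h) := by
    intro h p q hpq
    rw [happ h p, happ h q]
    exact iSup_mono fun f => (f.2.1 h) hpq
  have hub : ∀ a ∈ S, a ≤ g := fun a ha => le_sSup ha
  have hgle : g ≤ TF V C η hVrange g := by
    apply sSup_le
    intro a ha
    calc a ≤ TF V C η hVrange a := ha.2
      _ ≤ TF V C η hVrange g :=
          TF_mono V C η hVrange hVmono ha.1 hgmono (hub a ha)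
  have hTgmono : ∀ h, Monotone (TF V C η hVrange g h) :=
    TF_monocomp V C η hVrange hVmono g hgmono
  have hTg_in : TF V C η hVrange g ∈ S :=
    ⟨hTgmono, TF_mono V C η hVrange hVmono hgmono hTgmono hgle⟩
  refine ⟨g, hgmono, le_antisymm (hub _ hTg_in) hgle, fun X hm hfix => hub X ⟨hm, hfix⟩⟩

end Lattice

end RHT

/-- **Rural Hospital Theorem.** If `η` has strict priorities and the vacancy
function `V : ℝ₊ × ℕ → [0,1]` is weakly decreasing in its first argument, then the set of matched
agents is identical across `(η, V)`-stable outcomes: each school enrolls the same measure of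
students, and `η`-almost every student has the same probability of being matched. -/
theorem stmt5 {H : Type*} [Fintype H] (V : ℝ → ℕ → ℝ)
    (hVrange : ∀ (x : ℝ) (c : ℕ), 0 ≤ x → V x c ∈ Set.Icc (0:ℝ) 1)
    (hVmono : ∀ (c : ℕ) (x y : ℝ), 0 ≤ x → x ≤ y → V y c ≤ V x c)
    (C : H → ℕ) (η : Measure (Student H)) [IsFiniteMeasure η]
    (hη : StrictPriorities η)
    (M M' : MatchingFun H) (I I' : InterestFun H) (A A' : AdmissionsFun H)
    (h1 : StableOutcome η V C M I A) (h2 : StableOutcome η V C M' I' A') :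
    (∀ h : Option H, ∫ θ, M θ h ∂η = ∫ θ, M' θ h ∂η) ∧
    (∀ᵐ θ ∂η,
      ∑ h ∈ Finset.univ.filter (fun h : Option H => Prefers θ h none), M θ h =
      ∑ h ∈ Finset.univ.filter (fun h : Option H => Prefers θ h none), M' θ h) := by
  classical
  obtain ⟨hM1, hI1, hA1, hMeq1, hIeq1, hAeq1⟩ := h1
  obtain ⟨hM2, hI2, hA2, hMeq2, hIeq2, hAeq2⟩ := h2
  have hfixA : A = admissionsOf V C (interestOf η (matchingOf A)) := by
    conv_lhs => rw [hAeq1]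
    rw [hIeq1, hMeq1]
  have hfixA' : A' = admissionsOf V C (interestOf η (matchingOf A')) := by
    conv_lhs => rw [hAeq2]
    rw [hIeq2, hMeq2]
  obtain ⟨g, hgm, hgfix, hgmax⟩ := RHT.tarski V C η hVrange hVmono
  set AP : AdmissionsFun H := RHT.toAdm g with hAP
  have hfixAP : AP = admissionsOf V C (interestOf η (matchingOf AP)) := by
    conv_lhs => rw [hAP, ← hgfix]
    rfl
  have hAPadm : IsAdmissionsFun AP := by
    refine ⟨fun h => ⟨RHT.toAdm_mono (hgm h), fun p => RHT.toAdm_mem _ h p⟩, fun p => ?_⟩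
    have := congrFun (congrFun hfixAP none) p
    rw [this]
    rfl
  have lift : ∀ (X : AdmissionsFun H), IsAdmissionsFun X →
      X = admissionsOf V C (interestOf η (matchingOf X)) → ∀ h p, X h p ≤ AP h p := by
    intro X hX hfix
    set Xl : RHT.LA H := fun h p => ⟨X h p, (hX.1 h).2 p⟩ with hXl
    have hXladm : RHT.toAdm Xl = X := rfl
    have hXlm : ∀ h, Monotone (Xl h) :=
      fun h p q hpq => Subtype.mk_le_mk.mpr ((hX.1 h).1 hpq)
    have hTXl : RHT.TF V C η hVrange Xl = Xl := by
      funext h p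
      apply Subtype.ext
      show admissionsOf V C (interestOf η (matchingOf (RHT.toAdm Xl))) h p = X h p
      rw [hXladm, ← hfix]
    have hle : Xl ≤ g := hgmax Xl hXlm (le_of_eq hTXl.symm)
    intro h p
    exact Subtype.coe_le_coe.mpr (hle h p)
  have c1 := RHT.comparable V C hVrange hVmono η hη A AP hA1 hAPadm hfixA hfixAP
    (lift A hA1 hfixA)
  have c2 := RHT.comparable V C hVrange hVmono η hη A' AP hA2 hAPadm hfixA' hfixAP
    (lift A' hA2 hfixA')
  constructor
  · intro h
    rw [hMeq1, hMeq2, c1.1 h]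
    exact (c2.1 h).symm
  · filter_upwards [c1.2, c2.2] with θ e1 e2
    rw [hMeq1, hMeq2, RHT.sum_matchingOf A θ none, RHT.sum_matchingOf A' θ none, e1, e2]
end
end

section
/- If η has strict priorities and the vacancy function 𝒱 is weakly decreasing in its first argument, then for any (η, 𝒱)-stable outcome (M, I, A), any school h ∈ H, and any p ∈ [0,1], ∫ 1(p_h^θ > p) M_h(θ) dη(θ) = ∫₀^{I_h(p)} 𝒱(λ, C_h) dλ. -/
open MeasureTheory Filter
open scoped Classical ENNReal

noncomputable section

section Aux

lemma aux_sumprod {α : Type*} [LinearOrder α] (S : Finset α) (f : α → ℝ) :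
    ∑ a ∈ S, f a * ∏ b ∈ S.filter (fun b => a < b), (1 - f b)
      = 1 - ∏ a ∈ S, (1 - f a) := by
  induction S using Finset.induction_on_max with
  | empty => simp
  | insert a s ha ih =>
    have has : a ∉ s := fun h => lt_irrefl a (ha a h)
    rw [Finset.sum_insert has, Finset.prod_insert has]
    have h1 : (insert a s).filter (fun b => a < b) = ∅ := by
      rw [Finset.filter_eq_empty_iff]
      intro b hb
      rcases Finset.mem_insert.1 hb with rfl | hb
      · exact lt_irrefl _
      · exact not_lt_of_gt (ha b hb)
    have h2 : ∀ x ∈ s, (insert a s).filter (fun b => x < b)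
        = insert a (s.filter (fun b => x < b)) := by
      intro x hx
      rw [Finset.filter_insert, if_pos (ha x hx)]
    rw [h1, Finset.prod_empty, mul_one]
    have h3 : ∑ x ∈ s, f x * ∏ b ∈ (insert a s).filter (fun b => x < b), (1 - f b)
        = (1 - f a) * ∑ x ∈ s, f x * ∏ b ∈ s.filter (fun b => x < b), (1 - f b) := by
      rw [Finset.mul_sum]
      refine Finset.sum_congr rfl fun x hx => ?_
      rw [h2 x hx, Finset.prod_insert (fun h => has (Finset.filter_subset _ _ h))]
      ring
    rw [h3, ih]
    ring

lemma matching_sum_eq {H : Type*} [Fintype H] (A : AdmissionsFun H) (θ : Student H) (h0 : H) :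
    ∑ h' ∈ Finset.univ.filter (fun h' : Option H => Prefers θ h' (some h0)),
        matchingOf A θ h' =
      1 - ∏ h' ∈ Finset.univ.filter (fun h' : Option H => Prefers θ h' (some h0)),
        (1 - A h' (priOf θ h')) := by
  letI : LinearOrder (Option H) := θ.1
  have key := aux_sumprod (S := Finset.univ.filter (fun o : Option H => some h0 < o))
    (f := fun o => A o (priOf θ o))
  have hpref : ∀ a b : Option H, Prefers θ a b ↔ b < a := fun a b => Iff.rfl
  have hS : Finset.univ.filter (fun h' : Option H => Prefers θ h' (some h0))
      = Finset.univ.filter (fun o : Option H => some h0 < o) := by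
    apply Finset.filter_congr; intro x _; simp [hpref]
  rw [hS, ← key]
  refine Finset.sum_congr rfl fun x hx => ?_
  have hx' : some h0 < x := (Finset.mem_filter.1 hx).2
  unfold matchingOf
  congr 1
  have : Finset.univ.filter (fun h' : Option H => Prefers θ h' x)
      = (Finset.univ.filter (fun o : Option H => some h0 < o)).filter (fun b => x < b) := by
    rw [Finset.filter_filter]
    apply Finset.filter_congr; intro y _
    simp only [hpref]
    constructor
    · exact fun hy => ⟨lt_trans hx' hy, hy⟩
    · exact fun hy => hy.2
  rw [this]

end Aux

/-- If `η` has strict priorities and the vacancy function `V : ℝ₊ × ℕ → [0,1]`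
is weakly decreasing in its first argument, then for any `(η, V)`-stable outcome `(M, I, A)`, any
school `h` and any `p ∈ [0,1]`,
`∫ 1(p_h^θ > p) M_h(θ) dη(θ) = ∫₀^{I_h(p)} V(λ, C_h) dλ`. -/
theorem stmt8 {H : Type*} [Fintype H] (V : ℝ → ℕ → ℝ)
    (hVrange : ∀ (x : ℝ) (c : ℕ), 0 ≤ x → V x c ∈ Set.Icc (0:ℝ) 1)
    (hVmono : ∀ (c : ℕ) (x y : ℝ), 0 ≤ x → x ≤ y → V y c ≤ V x c)
    (C : H → ℕ) (η : Measure (Student H)) [IsFiniteMeasure η]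
    (hη : StrictPriorities η)
    (M : MatchingFun H) (I : InterestFun H) (A : AdmissionsFun H)
    (h : StableOutcome η V C M I A) (h0 : H) (p : unitInterval) :
    (∫ θ, (if p < θ.2 h0 then (1:ℝ) else 0) * M θ (some h0) ∂η) =
      ∫ x in (0:ℝ)..(I h0 p), V x (C h0) := by
  obtain ⟨hM, hI, hA, hMA, hIM, hAI⟩ := h
  have hAmono : ∀ o : Option H, Monotone (A o) := fun o => (hA.1 o).1
  have hA0 : ∀ (o : Option H) (q : unitInterval), 0 ≤ A o q := fun o q => ((hA.1 o).2 q).1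
  have hA1 : ∀ (o : Option H) (q : unitInterval), A o q ≤ 1 := fun o q => ((hA.1 o).2 q).2
  have hAnone : ∀ q : unitInterval, A none q = 1 := hA.2
  set D : Student H → ℝ := fun θ =>
    ∏ h' ∈ Finset.univ.filter (fun h' : Option H => Prefers θ h' (some h0)),
      (1 - A h' (priOf θ h')) with hDdef
  have hD0 : ∀ θ, 0 ≤ D θ := by
    intro θ
    exact Finset.prod_nonneg fun o _ => by linarith [hA1 o (priOf θ o)]
  have hD1 : ∀ θ, D θ ≤ 1 := by
    intro θ
    exact Finset.prod_le_one (fun o _ => by linarith [hA1 o (priOf θ o)])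
      (fun o _ => by linarith [hA0 o (priOf θ o)])
  have hDzero : ∀ θ, ¬ Prefers θ (some h0) none → D θ = 0 := by
    intro θ hno
    letI : LinearOrder (Option H) := θ.1
    have hmem : none ∈ Finset.univ.filter (fun h' : Option H => Prefers θ h' (some h0)) := by
      rw [Finset.mem_filter]
      refine ⟨Finset.mem_univ _, ?_⟩
      show some h0 < (none : Option H)
      have hle : some h0 ≤ (none : Option H) := not_lt.mp hno
      exact lt_of_le_of_ne hle (by simp)
    rw [hDdef]
    exact Finset.prod_eq_zero hmem (by rw [hAnone]; ring)
  have hphmeas : Measurable fun θ : Student H => θ.2 h0 :=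
    (measurable_pi_apply h0).comp measurable_snd
  have hDmeas : Measurable D := by
    have hrw : D = fun θ => ∏ o : Option H,
        if Prefers θ o (some h0) then (1 - A o (priOf θ o)) else 1 := by
      funext θ
      rw [hDdef]
      exact Finset.prod_filter _ _
    rw [hrw]
    apply Finset.measurable_prod
    intro o _
    apply Measurable.ite
    · have : {θ : Student H | Prefers θ o (some h0)}
          = Prod.fst ⁻¹' {L : LinearOrder (Option H) | L.lt (some h0) o} := rfl
      rw [this]
      exact measurable_fst MeasurableSpace.measurableSet_top
    · cases o with
      | none => exact show Measurable fun _ : Student H => (1:ℝ) - A none 1 from measurable_const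
      | some h'' =>
        have : Measurable fun θ : Student H => A (some h'') (θ.2 h'') :=
          (hAmono (some h'')).measurable.comp ((measurable_pi_apply h'').comp measurable_snd)
        exact measurable_const.sub this
    · exact measurable_const
  have hintg : ∀ f : Student H → ℝ, Measurable f → (∀ θ, |f θ| ≤ 1) → Integrable f η := by
    intro f hf hb
    exact (integrable_const (1:ℝ)).mono' hf.aestronglyMeasurable
      (Filter.Eventually.of_forall fun θ => by simpa using hb θ)
  have hmeasle : ∀ q : unitInterval,
      Measurable fun θ : Student H => (if q ≤ θ.2 h0 then (1:ℝ) else 0) :=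
    fun q => Measurable.ite (hphmeas measurableSet_Ici) measurable_const measurable_const
  have hmeaslt : ∀ q : unitInterval,
      Measurable fun θ : Student H => (if q < θ.2 h0 then (1:ℝ) else 0) :=
    fun q => Measurable.ite (hphmeas measurableSet_Ioi) measurable_const measurable_const
  have hmeaseq : ∀ q : unitInterval,
      Measurable fun θ : Student H => (if θ.2 h0 = q then (1:ℝ) else 0) :=
    fun q => Measurable.ite (hphmeas (measurableSet_singleton q)) measurable_const measurable_const
  have hApmeas : Measurable fun θ : Student H => A (some h0) (θ.2 h0) :=
    (hAmono (some h0)).measurable.comp hphmeas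
  have hind01 : ∀ (P : Prop) [Decidable P], (0:ℝ) ≤ (if P then (1:ℝ) else 0) ∧
      (if P then (1:ℝ) else 0) ≤ 1 := by
    intro P _; split <;> norm_num
  have hbd1 : ∀ a b : ℝ, 0 ≤ a → a ≤ 1 → 0 ≤ b → b ≤ 1 → |a * b| ≤ 1 := by
    intro a b ha1 ha2 hb1 hb2
    rw [abs_mul, abs_of_nonneg ha1, abs_of_nonneg hb1]
    nlinarith
  -- null sets from strict priorities
  have hnull : ∀ q : unitInterval, ∫ θ, (if θ.2 h0 = q then (1:ℝ) else 0) * D θ ∂η = 0 := by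
    intro q
    apply integral_eq_zero_of_ae
    rw [Filter.EventuallyEq, ae_iff]
    apply measure_mono_null _ (hη h0 q)
    intro θ hθ
    simp only [Set.mem_setOf_eq, Pi.zero_apply] at hθ ⊢
    by_cases heq : θ.2 h0 = q
    · refine ⟨?_, heq⟩
      by_contra hpref
      exact hθ (by rw [hDzero θ hpref]; ring)
    · exact absurd (by rw [if_neg heq]; ring) hθ
  have hIeq : ∀ q : unitInterval, I h0 q = ∫ θ, (if q ≤ θ.2 h0 then (1:ℝ) else 0) * D θ ∂η := by
    intro q
    have step1 : I h0 q = ∫ θ, (if q ≤ θ.2 h0 then (1:ℝ) else 0) *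
        (1 - ∑ h' ∈ Finset.univ.filter (fun h' : Option H => Prefers θ h' (some h0)),
          M θ h') ∂η := by
      rw [hIM]; rfl
    rw [step1]
    refine integral_congr_ae (Filter.Eventually.of_forall fun θ => ?_)
    show (if q ≤ θ.2 h0 then (1:ℝ) else 0) *
        (1 - ∑ h' ∈ Finset.univ.filter (fun h' : Option H => Prefers θ h' (some h0)), M θ h')
      = (if q ≤ θ.2 h0 then (1:ℝ) else 0) * D θ
    rw [hMA, matching_sum_eq A θ h0, hDdef]
    ring
  have hintle : ∀ q : unitInterval,
      Integrable (fun θ => (if q ≤ θ.2 h0 then (1:ℝ) else 0) * D θ) η := fun q =>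
    hintg _ ((hmeasle q).mul hDmeas)
      (fun θ => hbd1 _ _ (hind01 _).1 (hind01 _).2 (hD0 θ) (hD1 θ))
  have hintlt : ∀ q : unitInterval,
      Integrable (fun θ => (if q < θ.2 h0 then (1:ℝ) else 0) * D θ) η := fun q =>
    hintg _ ((hmeaslt q).mul hDmeas)
      (fun θ => hbd1 _ _ (hind01 _).1 (hind01 _).2 (hD0 θ) (hD1 θ))
  have hinteq : ∀ q : unitInterval,
      Integrable (fun θ => (if θ.2 h0 = q then (1:ℝ) else 0) * D θ) η := fun q =>
    hintg _ ((hmeaseq q).mul hDmeas)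
      (fun θ => hbd1 _ _ (hind01 _).1 (hind01 _).2 (hD0 θ) (hD1 θ))
  have hJeq : ∀ q : unitInterval,
      (∫ θ, (if q < θ.2 h0 then (1:ℝ) else 0) * D θ ∂η) = I h0 q := by
    intro q
    have hsplit : ∀ θ : Student H, (if q ≤ θ.2 h0 then (1:ℝ) else 0) * D θ =
        (if q < θ.2 h0 then (1:ℝ) else 0) * D θ + (if θ.2 h0 = q then (1:ℝ) else 0) * D θ := by
      intro θ
      rcases lt_trichotomy q (θ.2 h0) with hlt | heq | hgt
      · rw [if_pos hlt.le, if_pos hlt, if_neg (ne_of_gt hlt)]; ring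
      · rw [if_pos heq.le, if_neg (lt_irrefl _ ∘ (heq ▸ ·)), if_pos heq.symm]; ring
      · rw [if_neg (not_le.mpr hgt), if_neg (not_lt.mpr hgt.le), if_neg (ne_of_lt hgt)]; ring
    have hadd : (∫ θ, (if q ≤ θ.2 h0 then (1:ℝ) else 0) * D θ ∂η)
        = (∫ θ, (if q < θ.2 h0 then (1:ℝ) else 0) * D θ ∂η)
          + (∫ θ, (if θ.2 h0 = q then (1:ℝ) else 0) * D θ ∂η) := by
      rw [← integral_add (hintlt q) (hinteq q)]
      exact integral_congr_ae (Filter.Eventually.of_forall fun θ => hsplit θ)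
    rw [hIeq q]
    rw [hadd, hnull q]
    ring
  -- the matching function at h0
  have hMform : ∀ θ, M θ (some h0) = A (some h0) (θ.2 h0) * D θ := by
    intro θ; rw [hMA, hDdef]; rfl
  have hMfun : (fun θ => M θ (some h0)) = fun θ => A (some h0) (θ.2 h0) * D θ :=
    funext hMform
  have hMmeas : Measurable fun θ => M θ (some h0) := by
    rw [hMfun]; exact hApmeas.mul hDmeas
  have hM0 : ∀ θ, 0 ≤ M θ (some h0) := by
    intro θ; rw [hMform θ]; exact mul_nonneg (hA0 _ _) (hD0 θ)
  have hM1 : ∀ θ, M θ (some h0) ≤ 1 := by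
    intro θ; rw [hMform θ]
    nlinarith [hA0 (some h0) (θ.2 h0), hA1 (some h0) (θ.2 h0), hD0 θ, hD1 θ]
  have hintM : ∀ q : unitInterval,
      Integrable (fun θ => (if q < θ.2 h0 then (1:ℝ) else 0) * M θ (some h0)) η := fun q =>
    hintg _ ((hmeaslt q).mul hMmeas)
      (fun θ => hbd1 _ _ (hind01 _).1 (hind01 _).2 (hM0 θ) (hM1 θ))
  set G : unitInterval → ℝ :=
    fun q => ∫ θ, (if q < θ.2 h0 then (1:ℝ) else 0) * M θ (some h0) ∂η with hGdef
  have hAval : ∀ q : unitInterval, A (some h0) q = V (I h0 q) (C h0) := by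
    intro q; rw [hAI]; rfl
  have hInn : ∀ q : unitInterval, 0 ≤ I h0 q := fun q => (hI h0).2 q
  have hIanti : Antitone (I h0) := (hI h0).1
  -- key step estimate for G
  have hGdiff : ∀ q r : unitInterval, q ≤ r →
      A (some h0) q * (I h0 q - I h0 r) ≤ G q - G r ∧
      G q - G r ≤ A (some h0) r * (I h0 q - I h0 r) := by
    intro q r hqr
    have hdiff01 : ∀ θ : Student H,
        0 ≤ (if q < θ.2 h0 then (1:ℝ) else 0) - (if r < θ.2 h0 then (1:ℝ) else 0) ∧
        (if q < θ.2 h0 then (1:ℝ) else 0) - (if r < θ.2 h0 then (1:ℝ) else 0) ≤ 1 := by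
      intro θ
      by_cases hq : q < θ.2 h0
      · by_cases hr : r < θ.2 h0
        · simp [hq, hr]
        · simp [hq, hr]
      · have hr : ¬ r < θ.2 h0 := fun hr => hq (lt_of_le_of_lt hqr hr)
        simp [hq, hr]
    have hGsub : G q - G r = ∫ θ,
        ((if q < θ.2 h0 then (1:ℝ) else 0) - (if r < θ.2 h0 then (1:ℝ) else 0))
          * M θ (some h0) ∂η := by
      simp only [hGdef]
      rw [← integral_sub (hintM q) (hintM r)]
      exact integral_congr_ae (Filter.Eventually.of_forall fun θ => by dsimp only; ring)
    have hIsub : ∀ c : ℝ, c * (I h0 q - I h0 r) = ∫ θ,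
        c * (((if q < θ.2 h0 then (1:ℝ) else 0) - (if r < θ.2 h0 then (1:ℝ) else 0))
          * D θ) ∂η := by
      intro c
      rw [integral_const_mul]
      congr 1
      rw [← hJeq q, ← hJeq r, ← integral_sub (hintlt q) (hintlt r)]
      exact integral_congr_ae (Filter.Eventually.of_forall fun θ => by dsimp only; ring)
    have hintc : ∀ c : ℝ, Integrable (fun θ =>
        c * (((if q < θ.2 h0 then (1:ℝ) else 0) - (if r < θ.2 h0 then (1:ℝ) else 0))
          * D θ)) η := by
      intro c
      apply Integrable.const_mul
      apply hintg _ (((hmeaslt q).sub (hmeaslt r)).mul hDmeas)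
      exact fun θ => hbd1 _ _ (hdiff01 θ).1 (hdiff01 θ).2 (hD0 θ) (hD1 θ)
    have hintd : Integrable (fun θ =>
        ((if q < θ.2 h0 then (1:ℝ) else 0) - (if r < θ.2 h0 then (1:ℝ) else 0))
          * M θ (some h0)) η := by
      apply hintg _ (((hmeaslt q).sub (hmeaslt r)).mul hMmeas)
      exact fun θ => hbd1 _ _ (hdiff01 θ).1 (hdiff01 θ).2 (hM0 θ) (hM1 θ)
    constructor
    · rw [hGsub, hIsub (A (some h0) q)]
      apply integral_mono (hintc _) hintd
      intro θ
      dsimp only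
      rw [hMform θ]
      by_cases hq : q < θ.2 h0
      · by_cases hr : r < θ.2 h0
        · simp only [if_pos hq, if_pos hr, sub_self, zero_mul, mul_zero]; exact le_refl 0
        · simp only [if_pos hq, if_neg hr, sub_zero, one_mul]
          have := mul_le_mul_of_nonneg_right (hAmono (some h0) (le_of_lt hq)) (hD0 θ)
          linarith
      · have hr : ¬ r < θ.2 h0 := fun hr => hq (lt_of_le_of_lt hqr hr)
        simp only [if_neg hq, if_neg hr, sub_self, zero_mul, mul_zero]; exact le_refl 0
    · rw [hGsub, hIsub (A (some h0) r)]
      apply integral_mono hintd (hintc _)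
      intro θ
      dsimp only
      rw [hMform θ]
      by_cases hq : q < θ.2 h0
      · by_cases hr : r < θ.2 h0
        · simp only [if_pos hq, if_pos hr, sub_self, zero_mul, mul_zero]; exact le_refl 0
        · simp only [if_pos hq, if_neg hr, sub_zero, one_mul]
          have hple : θ.2 h0 ≤ r := not_lt.mp hr
          have := mul_le_mul_of_nonneg_right (hAmono (some h0) hple) (hD0 θ)
          linarith
      · have hr : ¬ r < θ.2 h0 := fun hr => hq (lt_of_le_of_lt hqr hr)
        simp only [if_neg hq, if_neg hr, sub_self, zero_mul, mul_zero]; exact le_refl 0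
  -- interval integrability of V
  have hVii : ∀ a b : ℝ, 0 ≤ a → 0 ≤ b →
      IntervalIntegrable (fun x => V x (C h0)) MeasureTheory.volume a b := by
    intro a b ha hb
    apply AntitoneOn.intervalIntegrable
    intro x hx y hy hxy
    have hx0 : 0 ≤ x := by
      rcases Set.mem_uIcc.mp hx with ⟨h1, _⟩ | ⟨h1, _⟩
      · linarith
      · linarith
    exact hVmono (C h0) x y hx0 hxy
  -- step estimate for the interval integral
  have hIVdiff : ∀ q r : unitInterval, q ≤ r →
      A (some h0) q * (I h0 q - I h0 r) ≤ (∫ x in (I h0 r)..(I h0 q), V x (C h0)) ∧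
      (∫ x in (I h0 r)..(I h0 q), V x (C h0)) ≤ A (some h0) r * (I h0 q - I h0 r) := by
    intro q r hqr
    have hab : I h0 r ≤ I h0 q := hIanti hqr
    have ha : 0 ≤ I h0 r := hInn r
    have hii := hVii (I h0 r) (I h0 q) ha (hInn q)
    constructor
    · have hlow : ∀ x ∈ Set.Icc (I h0 r) (I h0 q), V (I h0 q) (C h0) ≤ V x (C h0) := by
        intro x hx
        exact hVmono (C h0) x (I h0 q) (le_trans ha hx.1) hx.2
      have := intervalIntegral.integral_mono_on hab (intervalIntegrable_const) hii hlow
      rw [intervalIntegral.integral_const] at this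
      rw [hAval q]
      calc V (I h0 q) (C h0) * (I h0 q - I h0 r)
          = (I h0 q - I h0 r) • V (I h0 q) (C h0) := by rw [smul_eq_mul]; ring
        _ ≤ _ := this
    · have hhigh : ∀ x ∈ Set.Icc (I h0 r) (I h0 q), V x (C h0) ≤ V (I h0 r) (C h0) := by
        intro x hx
        exact hVmono (C h0) (I h0 r) x ha hx.1
      have := intervalIntegral.integral_mono_on hab hii (intervalIntegrable_const) hhigh
      rw [intervalIntegral.integral_const] at this
      rw [hAval r]
      calc (∫ x in (I h0 r)..(I h0 q), V x (C h0))
          ≤ (I h0 q - I h0 r) • V (I h0 r) (C h0) := this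
        _ = V (I h0 r) (C h0) * (I h0 q - I h0 r) := by rw [smul_eq_mul]; ring
  set Ψ : unitInterval → ℝ :=
    fun q => G q - ∫ x in (0:ℝ)..(I h0 q), V x (C h0) with hΨdef
  have hΨsub : ∀ q r : unitInterval, q ≤ r →
      Ψ q - Ψ r = (G q - G r) - ∫ x in (I h0 r)..(I h0 q), V x (C h0) := by
    intro q r hqr
    have hadj : (∫ x in (0:ℝ)..(I h0 r), V x (C h0))
        + (∫ x in (I h0 r)..(I h0 q), V x (C h0))
        = ∫ x in (0:ℝ)..(I h0 q), V x (C h0) :=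
      intervalIntegral.integral_add_adjacent_intervals
        (hVii 0 (I h0 r) le_rfl (hInn r)) (hVii (I h0 r) (I h0 q) (hInn r) (hInn q))
    simp only [hΨdef]
    linarith
  have hΨstep : ∀ q r : unitInterval, q ≤ r →
      |Ψ q - Ψ r| ≤ (A (some h0) r - A (some h0) q) * (I h0 q - I h0 r) := by
    intro q r hqr
    have h1 := hGdiff q r hqr
    have h2 := hIVdiff q r hqr
    have h3 := hΨsub q r hqr
    rw [abs_le]
    constructor <;> [linarith [h1.1, h2.2]; linarith [h1.2, h2.1]]
  have hI1 : I h0 1 = 0 := by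
    have : (∫ θ, (if (1:unitInterval) ≤ θ.2 h0 then (1:ℝ) else 0) * D θ ∂η)
        = ∫ θ, (if θ.2 h0 = 1 then (1:ℝ) else 0) * D θ ∂η := by
      refine integral_congr_ae (Filter.Eventually.of_forall fun θ => ?_)
      dsimp only
      congr 1
      by_cases hp : θ.2 h0 = 1
      · rw [if_pos (le_of_eq hp.symm), if_pos hp]
      · rw [if_neg (fun hle => hp (le_antisymm unitInterval.le_one' hle)), if_neg hp]
    rw [hIeq 1, this, hnull 1]
  have hΨ1 : Ψ 1 = 0 := by
    have hG1 : G 1 = 0 := by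
      simp only [hGdef]
      have : ∀ θ : Student H, (if (1:unitInterval) < θ.2 h0 then (1:ℝ) else 0)
          * M θ (some h0) = 0 := by
        intro θ
        rw [if_neg (not_lt.mpr unitInterval.le_one')]
        ring
      rw [show (fun θ : Student H => (if (1:unitInterval) < θ.2 h0 then (1:ℝ) else 0)
          * M θ (some h0)) = fun _ => (0:ℝ) from funext this]
      exact integral_zero _ _
    simp only [hΨdef]
    rw [hG1, hI1, intervalIntegral.integral_same]
    ring
  -- continuity of the interest function
  have hIcont : Continuous (fun q : unitInterval => I h0 q) := by
    rw [continuous_iff_seqContinuous]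
    intro u x hux
    have hrw : (fun n => (fun q : unitInterval => I h0 q) (u n))
        = fun n => ∫ θ, (if u n ≤ θ.2 h0 then (1:ℝ) else 0) * D θ ∂η :=
      funext fun n => hIeq (u n)
    show Filter.Tendsto (fun n => (fun q : unitInterval => I h0 q) (u n)) atTop _
    rw [hrw, show (fun q : unitInterval => I h0 q) x = ∫ θ,
      (if x ≤ θ.2 h0 then (1:ℝ) else 0) * D θ ∂η from hIeq x]
    apply tendsto_integral_of_dominated_convergence (bound := fun _ => (1:ℝ))
    · exact fun n => ((hmeasle (u n)).mul hDmeas).aestronglyMeasurable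
    · exact integrable_const 1
    · exact fun n => Filter.Eventually.of_forall fun θ => by
        simpa [Real.norm_eq_abs] using
          hbd1 _ _ (hind01 _).1 (hind01 _).2 (hD0 θ) (hD1 θ)
    · rw [ae_iff]
      apply measure_mono_null _ (hη h0 x)
      intro θ hθ
      simp only [Set.mem_setOf_eq] at hθ ⊢
      by_contra hcon
      apply hθ
      by_cases hD : D θ = 0
      · have : ∀ n, (if u n ≤ θ.2 h0 then (1:ℝ) else 0) * D θ = 0 := fun n => by
          rw [hD]; ring
        have h2 : (if x ≤ θ.2 h0 then (1:ℝ) else 0) * D θ = 0 := by rw [hD]; ring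
        rw [h2, show (fun n => (if u n ≤ θ.2 h0 then (1:ℝ) else 0) * D θ)
          = fun _ => (0:ℝ) from funext this]
        exact tendsto_const_nhds
      · have hpref : Prefers θ (some h0) none := by
          by_contra hp; exact hD (hDzero θ hp)
        have hne : θ.2 h0 ≠ x := fun he => hcon ⟨hpref, he⟩
        rcases lt_or_gt_of_ne hne with hlt | hgt
        · have hev : ∀ᶠ n in atTop, θ.2 h0 < u n := hux.eventually_const_lt hlt
          have hev' : ∀ᶠ n in atTop,
              (0:ℝ) = (if u n ≤ θ.2 h0 then (1:ℝ) else 0) * D θ :=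
            hev.mono fun n hn => by rw [if_neg (not_le.mpr hn)]; ring
          rw [show (if x ≤ θ.2 h0 then (1:ℝ) else 0) * D θ = 0 from
            by rw [if_neg (not_le.mpr hlt)]; ring]
          exact Filter.Tendsto.congr' hev' tendsto_const_nhds
        · have hev : ∀ᶠ n in atTop, u n < θ.2 h0 := hux.eventually_lt_const hgt
          have hev' : ∀ᶠ n in atTop,
              D θ = (if u n ≤ θ.2 h0 then (1:ℝ) else 0) * D θ :=
            hev.mono fun n hn => by rw [if_pos hn.le]; ring
          rw [show (if x ≤ θ.2 h0 then (1:ℝ) else 0) * D θ = D θ from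
            by rw [if_pos hgt.le]; ring]
          exact Filter.Tendsto.congr' hev' tendsto_const_nhds
  -- main estimate
  have hmain : ∀ ε : ℝ, 0 < ε → |Ψ p| ≤ ε := by
    intro ε hε
    have huc := CompactSpace.uniformContinuous_of_continuous hIcont
    rw [Metric.uniformContinuous_iff] at huc
    obtain ⟨δ, hδ, hδ'⟩ := huc ε hε
    obtain ⟨n0, hn0⟩ := exists_nat_one_div_lt hδ
    set N : ℕ := n0 + 1 with hN
    have hNpos : (0:ℝ) < N := by positivity
    have hp1 : (0:ℝ) ≤ 1 - (p:ℝ) := by linarith [p.2.2]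
    have htmem : ∀ i : ℕ, (p:ℝ) + (min i N : ℕ) * (1 - (p:ℝ)) / N ∈ Set.Icc (0:ℝ) 1 := by
      intro i
      constructor
      · have : (0:ℝ) ≤ (min i N : ℕ) * (1 - (p:ℝ)) / N := by positivity
        linarith [p.2.1]
      · have h1 : ((min i N : ℕ) : ℝ) ≤ (N : ℝ) := by
          exact_mod_cast min_le_right i N
        have h2 : ((min i N : ℕ) : ℝ) * (1 - (p:ℝ)) / N ≤ (N:ℝ) * (1 - (p:ℝ)) / N := by
          apply div_le_div_of_nonneg_right ?_ hNpos.le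
          exact mul_le_mul_of_nonneg_right h1 hp1
        have h3 : (N:ℝ) * (1 - (p:ℝ)) / N = 1 - (p:ℝ) := by field_simp
        linarith
    set t : ℕ → unitInterval := fun i => ⟨(p:ℝ) + (min i N : ℕ) * (1 - (p:ℝ)) / N, htmem i⟩
      with htdef
    have ht0 : t 0 = p := by
      apply Subtype.ext
      simp [htdef]
    have htN : t N = 1 := by
      apply Subtype.ext
      show (p:ℝ) + (min N N : ℕ) * (1 - (p:ℝ)) / N = 1
      rw [min_self]
      field_simp
      ring
    have htmono : ∀ i : ℕ, t i ≤ t (i + 1) := by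
      intro i
      show (p:ℝ) + (min i N : ℕ) * (1 - (p:ℝ)) / N
          ≤ (p:ℝ) + (min (i+1) N : ℕ) * (1 - (p:ℝ)) / N
      have h1 : ((min i N : ℕ) : ℝ) ≤ ((min (i+1) N : ℕ) : ℝ) := by
        exact_mod_cast min_le_min (Nat.le_succ i) le_rfl
      have := div_le_div_of_nonneg_right (mul_le_mul_of_nonneg_right h1 hp1) hNpos.le
      linarith
    have htdist : ∀ i : ℕ, dist (t i) (t (i+1)) < δ := by
      intro i
      rw [Subtype.dist_eq, Real.dist_eq, abs_of_nonpos (sub_nonpos.mpr (Subtype.coe_le_coe.mpr (htmono i)))]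
      have h1 : ((min (i+1) N : ℕ) : ℝ) ≤ ((min i N : ℕ) : ℝ) + 1 := by
        exact_mod_cast (by omega : min (i+1) N ≤ min i N + 1)
      have h2 : ((min (i+1) N : ℕ) : ℝ) * (1 - (p:ℝ)) / N
          ≤ (((min i N : ℕ) : ℝ) + 1) * (1 - (p:ℝ)) / N := by
        apply div_le_div_of_nonneg_right (mul_le_mul_of_nonneg_right h1 hp1) hNpos.le
      have h3 : (((min i N : ℕ) : ℝ) + 1) * (1 - (p:ℝ)) / N
          = ((min i N : ℕ) : ℝ) * (1 - (p:ℝ)) / N + (1 - (p:ℝ)) / N := by ring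
      have h4 : (1 - (p:ℝ)) / N ≤ 1 / N := by
        apply div_le_div_of_nonneg_right ?_ hNpos.le
        linarith [p.2.1]
      have h5 : (1:ℝ) / N < δ := by
        rw [hN]
        push_cast
        exact hn0
      show -((t i : ℝ) - (t (i+1) : ℝ)) < δ
      simp only [htdef]
      push_cast
      push_cast at h2 h3 h4 h5
      nlinarith
    have hstepbd : ∀ i : ℕ, |Ψ (t i) - Ψ (t (i+1))|
        ≤ (A (some h0) (t (i+1)) - A (some h0) (t i)) * ε := by
      intro i
      have h1 := hΨstep (t i) (t (i+1)) (htmono i)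
      have h2 : I h0 (t i) - I h0 (t (i+1)) ≤ ε := by
        have := hδ' (htdist i)
        rw [Real.dist_eq] at this
        calc I h0 (t i) - I h0 (t (i+1)) ≤ |I h0 (t i) - I h0 (t (i+1))| := le_abs_self _
          _ ≤ ε := le_of_lt this
      have h3 : 0 ≤ A (some h0) (t (i+1)) - A (some h0) (t i) := by
        have := hAmono (some h0) (htmono i)
        linarith
      calc |Ψ (t i) - Ψ (t (i+1))|
          ≤ (A (some h0) (t (i+1)) - A (some h0) (t i)) * (I h0 (t i) - I h0 (t (i+1))) := h1
        _ ≤ (A (some h0) (t (i+1)) - A (some h0) (t i)) * ε := by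
            exact mul_le_mul_of_nonneg_left h2 h3
    have htele : Ψ (t 0) - Ψ (t N) = ∑ i ∈ Finset.range N, (Ψ (t i) - Ψ (t (i+1))) :=
      (Finset.sum_range_sub' (f := fun i => Ψ (t i)) N).symm
    have hAtele : ∑ i ∈ Finset.range N,
        (A (some h0) (t (i+1)) - A (some h0) (t i))
        = A (some h0) (t N) - A (some h0) (t 0) :=
      Finset.sum_range_sub (f := fun i => A (some h0) (t i)) N
    calc |Ψ p| = |Ψ (t 0) - Ψ (t N)| := by rw [ht0, htN, hΨ1]; ring_nf
      _ = |∑ i ∈ Finset.range N, (Ψ (t i) - Ψ (t (i+1)))| := by rw [htele]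
      _ ≤ ∑ i ∈ Finset.range N, |Ψ (t i) - Ψ (t (i+1))| := Finset.abs_sum_le_sum_abs _ _
      _ ≤ ∑ i ∈ Finset.range N, (A (some h0) (t (i+1)) - A (some h0) (t i)) * ε :=
          Finset.sum_le_sum fun i _ => hstepbd i
      _ = (A (some h0) (t N) - A (some h0) (t 0)) * ε := by rw [← Finset.sum_mul, hAtele]
      _ ≤ 1 * ε := by
          apply mul_le_mul_of_nonneg_right ?_ (le_of_lt hε)
          linarith [hA1 (some h0) (t N), hA0 (some h0) (t 0)]
      _ = ε := one_mul ε
  have hΨp : Ψ p = 0 := by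
    by_contra hne
    have hpos : 0 < |Ψ p| := abs_pos.mpr hne
    have := hmain (|Ψ p| / 2) (by linarith)
    linarith
  simp only [hΨdef, hGdef] at hΨp
  linarith
end
end

section
/- Fix m, C ∈ ℕ and ε > 0. If λ ∈ ℝ₊ is such that |V^pois(mλ, mC) − V^det(λ, C)| > ε, then C − √(2C·log(1/ε)/m) ≤ λ ≤ C + √(2C·log(1/ε)/m) + 4·log(1/ε)/m. -/
noncomputable section

lemma exp_tsum' (x : ℝ) : Real.exp x = ∑' n : ℕ, x ^ n / (Nat.factorial n : ℝ) := by
  rw [Real.exp_eq_exp_ℝ, NormedSpace.exp_eq_tsum_div]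

lemma logF' (r : ℝ) (h0 : 0 < r) (h1 : r ≤ 1) :
    (1 - r) + (1 - r)^2 / 2 ≤ -Real.log r := by
  set f : ℝ → ℝ := fun x => -Real.log x - (1 - x) - (1 - x)^2/2 with hf
  have hd : ∀ x : ℝ, 0 < x →
      HasDerivAt f (-x⁻¹ - (-1) - (2 * (1 - x)^1 * (-1) / 2)) x := by
    intro x hx0
    have h1 : HasDerivAt Real.log x⁻¹ x := Real.hasDerivAt_log (ne_of_gt hx0)
    have h2 : HasDerivAt (fun y : ℝ => 1 - y) (-1) x := (hasDerivAt_id x).const_sub 1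
    exact (h1.neg.sub h2).sub ((h2.pow 2).div_const 2)
  have key : AntitoneOn f (Set.Icc r 1) := by
    apply antitoneOn_of_deriv_nonpos (convex_Icc r 1)
    · intro x hx
      simp only [Set.mem_Icc] at hx
      exact ((hd x (lt_of_lt_of_le h0 hx.1)).differentiableAt.continuousAt).continuousWithinAt
    · intro x hx
      rw [interior_Icc] at hx
      exact (hd x (lt_trans h0 hx.1)).differentiableAt.differentiableWithinAt
    · intro x hx
      rw [interior_Icc] at hx
      have hx0 : 0 < x := lt_trans h0 hx.1
      rw [(hd x hx0).deriv]
      have hxi : x * x⁻¹ = 1 := mul_inv_cancel₀ (ne_of_gt hx0)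
      nlinarith [sq_nonneg (x - 1)]
  have := key (Set.left_mem_Icc.mpr h1) (Set.right_mem_Icc.mpr h1) h1
  simp only [hf, Real.log_one] at this
  norm_num at this
  linarith

lemma logG' (s : ℝ) (h0 : 0 < s) (h1 : s ≤ 1) :
    (1 - s)^2 / 2 ≤ 1 - s + s * Real.log s := by
  set g : ℝ → ℝ := fun x => 1 - x + x * Real.log x - (1 - x)^2/2 with hg
  have hd : ∀ x : ℝ, 0 < x →
      HasDerivAt g (-1 + (1 * Real.log x + x * x⁻¹) - (2 * (1 - x)^1 * (-1) / 2)) x := by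
    intro x hx0
    have h1 : HasDerivAt Real.log x⁻¹ x := Real.hasDerivAt_log (ne_of_gt hx0)
    have h2 : HasDerivAt (fun y : ℝ => 1 - y) (-1) x := (hasDerivAt_id x).const_sub 1
    exact (h2.add ((hasDerivAt_id x).mul h1)).sub ((h2.pow 2).div_const 2)
  have key : AntitoneOn g (Set.Icc s 1) := by
    apply antitoneOn_of_deriv_nonpos (convex_Icc s 1)
    · intro x hx
      simp only [Set.mem_Icc] at hx
      exact ((hd x (lt_of_lt_of_le h0 hx.1)).differentiableAt.continuousAt).continuousWithinAt
    · intro x hx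
      rw [interior_Icc] at hx
      exact (hd x (lt_trans h0 hx.1)).differentiableAt.differentiableWithinAt
    · intro x hx
      rw [interior_Icc] at hx
      have hx0 : 0 < x := lt_trans h0 hx.1
      rw [(hd x hx0).deriv]
      have hxi : x * x⁻¹ = 1 := mul_inv_cancel₀ (ne_of_gt hx0)
      have hlog : Real.log x ≤ x - 1 := Real.log_le_sub_one_of_pos hx0
      nlinarith
  have := key (Set.left_mem_Icc.mpr h1) (Set.right_mem_Icc.mpr h1) h1
  simp only [hg, Real.log_one] at this
  norm_num at this
  linarith

lemma Vpois_nonneg (μ : ℝ) (hμ : 0 ≤ μ) (n : ℕ) : 0 ≤ Vpois μ n := by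
  apply Finset.sum_nonneg
  intro k _
  positivity

lemma Vpois_le_one (μ : ℝ) (hμ : 0 ≤ μ) (n : ℕ) : Vpois μ n ≤ 1 := by
  have : Vpois μ n = Real.exp (-μ) * ∑ k ∈ Finset.range n, μ ^ k / (Nat.factorial k : ℝ) := by
    rw [Vpois, Finset.mul_sum]
    exact Finset.sum_congr rfl fun k _ => by rw [mul_div_assoc]
  rw [this]
  calc Real.exp (-μ) * ∑ k ∈ Finset.range n, μ ^ k / (Nat.factorial k : ℝ)
      ≤ Real.exp (-μ) * Real.exp μ :=
        mul_le_mul_of_nonneg_left (Real.sum_le_exp_of_nonneg hμ n) (le_of_lt (Real.exp_pos _))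
    _ = 1 := by rw [← Real.exp_add]; simp

lemma chernoff_low (μ : ℝ) (n : ℕ) (hn : 1 ≤ n) (hμ : (n : ℝ) ≤ μ) :
    Vpois μ n ≤ Real.exp ((n : ℝ) * Real.log (μ / n) + n - μ) := by
  have hn0 : (0 : ℝ) < n := by exact_mod_cast hn
  have hμ0 : 0 < μ := lt_of_lt_of_le hn0 hμ
  have hr : (0 : ℝ) < μ / n := div_pos hμ0 hn0
  have key : ∀ k ∈ Finset.range n,
      Real.exp (-μ) * μ ^ k / (Nat.factorial k : ℝ)
        ≤ Real.exp (-μ) * ((μ / n)^n * ((n:ℝ) ^ k / (Nat.factorial k : ℝ))) := by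
    intro k hk
    rw [Finset.mem_range] at hk
    have hterm : μ ^ k ≤ (μ / n)^n * (n:ℝ)^k := by
      rw [div_pow, div_mul_eq_mul_div, le_div_iff₀ (by positivity)]
      have e1 : μ ^ n = μ ^ k * μ ^ (n - k) := by rw [← pow_add]; congr 1; omega
      have e2 : (n:ℝ) ^ n = (n:ℝ) ^ k * (n:ℝ) ^ (n - k) := by rw [← pow_add]; congr 1; omega
      have h3 : (n:ℝ) ^ (n-k) ≤ μ ^ (n-k) := pow_le_pow_left₀ (le_of_lt hn0) hμ (n-k)
      rw [e1, e2]
      nlinarith [mul_le_mul_of_nonneg_left h3 (show (0:ℝ) ≤ μ^k * (n:ℝ)^k by positivity)]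
    rw [mul_div_assoc]
    apply mul_le_mul_of_nonneg_left _ (le_of_lt (Real.exp_pos _))
    rw [div_le_iff₀ (show (0:ℝ) < (Nat.factorial k : ℝ) by positivity)]
    have e : (μ/n)^n * ((n:ℝ)^k/(Nat.factorial k : ℝ)) * (Nat.factorial k : ℝ) = (μ/n)^n * (n:ℝ)^k := by
      field_simp
    rw [e]; exact hterm
  calc Vpois μ n ≤ ∑ k ∈ Finset.range n, Real.exp (-μ) * ((μ / n)^n * ((n:ℝ) ^ k / (Nat.factorial k : ℝ))) :=
        Finset.sum_le_sum key
    _ = Real.exp (-μ) * (μ/n)^n * ∑ k ∈ Finset.range n, ((n:ℝ) ^ k / (Nat.factorial k : ℝ)) := by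
        rw [Finset.mul_sum]; apply Finset.sum_congr rfl; intro k _; ring
    _ ≤ Real.exp (-μ) * (μ/n)^n * Real.exp n := by
        apply mul_le_mul_of_nonneg_left (Real.sum_le_exp_of_nonneg (le_of_lt hn0) n) (by positivity)
    _ = Real.exp ((n : ℝ) * Real.log (μ / n) + n - μ) := by
        rw [show (μ/n)^n = Real.exp ((n:ℝ) * Real.log (μ/n)) by
          rw [← Real.log_pow, Real.exp_log (by positivity)]]
        rw [← Real.exp_add, ← Real.exp_add]
        ring_nf

set_option maxHeartbeats 1000000 in
lemma chernoff_high (μ : ℝ) (n : ℕ) (hμ0 : 0 < μ) (hμ : μ ≤ (n : ℝ)) :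
    1 - Vpois μ n ≤ Real.exp ((n : ℝ) * Real.log (μ / n) + n - μ) := by
  have hn0 : (0 : ℝ) < n := lt_of_lt_of_le hμ0 hμ
  have hsumμ : Summable (fun k : ℕ => μ ^ k / (Nat.factorial k : ℝ)) :=
    Real.summable_pow_div_factorial μ
  have hsumn : Summable (fun k : ℕ => (n:ℝ) ^ k / (Nat.factorial k : ℝ)) :=
    Real.summable_pow_div_factorial (n:ℝ)
  have hsplitμ := Summable.sum_add_tsum_nat_add n hsumμ
  have hsplitn := Summable.sum_add_tsum_nat_add n hsumn
  have hVp : Vpois μ n = Real.exp (-μ) * ∑ k ∈ Finset.range n, μ ^ k / (Nat.factorial k : ℝ) := by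
    rw [Vpois, Finset.mul_sum]
    exact Finset.sum_congr rfl fun k _ => by rw [mul_div_assoc]
  have h1 : 1 - Vpois μ n = Real.exp (-μ) * ∑' j : ℕ, μ ^ (j + n) / (Nat.factorial (j + n) : ℝ) := by
    rw [hVp]
    have : (1 : ℝ) = Real.exp (-μ) * Real.exp μ := by rw [← Real.exp_add]; simp
    rw [this, exp_tsum' μ, ← hsplitμ]
    ring
  rw [h1]
  have hterm : ∀ j : ℕ, μ ^ (j + n) / (Nat.factorial (j + n) : ℝ)
      ≤ (μ/n)^n * ((n:ℝ) ^ (j + n) / (Nat.factorial (j + n) : ℝ)) := by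
    intro j
    rw [div_le_iff₀ (show (0:ℝ) < (Nat.factorial (j+n) : ℝ) by positivity)]
    have e : (μ/n)^n * ((n:ℝ)^(j+n)/(Nat.factorial (j+n) : ℝ)) * (Nat.factorial (j+n) : ℝ)
        = (μ/n)^n * (n:ℝ)^(j+n) := by field_simp
    rw [e, div_pow, div_mul_eq_mul_div, le_div_iff₀ (by positivity)]
    have e2 : (n:ℝ)^(j+n) = (n:ℝ)^j * (n:ℝ)^n := pow_add _ _ _
    have e3 : μ^(j+n) = μ^j * μ^n := pow_add _ _ _
    have h3 : μ ^ j ≤ (n:ℝ) ^ j := pow_le_pow_left₀ (le_of_lt hμ0) hμ j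
    rw [e2, e3]
    nlinarith [mul_le_mul_of_nonneg_left h3 (show (0:ℝ) ≤ μ^n * (n:ℝ)^n by positivity),
      pow_pos hμ0 n, pow_pos hn0 n]
  have hsumμ' : Summable (fun j : ℕ => μ ^ (j + n) / (Nat.factorial (j + n) : ℝ)) :=
    (summable_nat_add_iff n).mpr hsumμ
  have hsumn' : Summable (fun j : ℕ => (n:ℝ) ^ (j + n) / (Nat.factorial (j + n) : ℝ)) :=
    (summable_nat_add_iff n).mpr hsumn
  have htail : ∑' j : ℕ, μ ^ (j + n) / (Nat.factorial (j + n) : ℝ)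
      ≤ (μ/n)^n * ∑' j : ℕ, (n:ℝ) ^ (j + n) / (Nat.factorial (j + n) : ℝ) := by
    rw [← tsum_mul_left]
    exact Summable.tsum_le_tsum hterm hsumμ' (hsumn'.mul_left _)
  have htail2 : ∑' j : ℕ, (n:ℝ) ^ (j + n) / (Nat.factorial (j + n) : ℝ) ≤ Real.exp n := by
    have hpart : 0 ≤ ∑ k ∈ Finset.range n, (n:ℝ) ^ k / (Nat.factorial k : ℝ) := by positivity
    rw [← exp_tsum'] at hsplitn
    linarith
  calc Real.exp (-μ) * ∑' j : ℕ, μ ^ (j + n) / (Nat.factorial (j + n) : ℝ)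
      ≤ Real.exp (-μ) * ((μ/n)^n * Real.exp n) := by
        apply mul_le_mul_of_nonneg_left _ (le_of_lt (Real.exp_pos _))
        refine le_trans htail ?_
        exact mul_le_mul_of_nonneg_left htail2 (by positivity)
    _ = Real.exp ((n : ℝ) * Real.log (μ / n) + n - μ) := by
        rw [show (μ/n)^n = Real.exp ((n:ℝ) * Real.log (μ/n)) by
          rw [← Real.log_pow, Real.exp_log (by positivity)]]
        rw [← Real.exp_add, ← Real.exp_add]
        ring_nf

set_option maxHeartbeats 1600000 in
/-- Fix `m, C ∈ ℕ` (with `m ≥ 1`) and `ε > 0`. If `λ ∈ ℝ₊` is such that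
`|V^pois(mλ, mC) − V^det(λ, C)| > ε`, then
`C − √(2C·log(1/ε)/m) ≤ λ ≤ C + √(2C·log(1/ε)/m) + 4·log(1/ε)/m`. -/
theorem stmt12 (m C : ℕ) (hm : 0 < m) (ε : ℝ) (hε : 0 < ε) (lam : ℝ) (hlam : 0 ≤ lam)
    (h : ε < |Vpois ((m : ℝ) * lam) (m * C) - Vdet lam C|) :
    (C : ℝ) - Real.sqrt (2 * (C : ℝ) * Real.log (1 / ε) / (m : ℝ)) ≤ lam ∧
    lam ≤ (C : ℝ) + Real.sqrt (2 * (C : ℝ) * Real.log (1 / ε) / (m : ℝ)) +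
      4 * Real.log (1 / ε) / (m : ℝ) := by
  have hm0 : (0 : ℝ) < m := by exact_mod_cast hm
  have hμnn : (0:ℝ) ≤ (m:ℝ) * lam := by positivity
  set L := Real.log (1 / ε) with hL
  have hLeq : L = -Real.log ε := by rw [hL, one_div, Real.log_inv]
  have hsqnn : (0:ℝ) ≤ Real.sqrt (2 * (C : ℝ) * L / (m : ℝ)) := Real.sqrt_nonneg _
  by_cases hlt : lam < (C : ℝ)
  · -- case λ < C : Vdet = 1
    have hC0 : (0:ℝ) < C := lt_of_le_of_lt hlam hlt
    have hVd : Vdet lam C = 1 := if_pos hlt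
    rw [hVd] at h
    have hVle : Vpois ((m:ℝ)*lam) (m*C) ≤ 1 := Vpois_le_one _ hμnn _
    rw [abs_of_nonpos (by linarith)] at h
    have h' : ε < 1 - Vpois ((m:ℝ)*lam) (m*C) := by linarith
    have hV0 : 0 ≤ Vpois ((m:ℝ)*lam) (m*C) := Vpois_nonneg _ hμnn _
    have hε1 : ε < 1 := by linarith
    have hLpos : 0 < L := by
      rw [hL, one_div]
      exact Real.log_pos ((one_lt_inv₀ hε).mpr hε1)
    have hlam0 : 0 < lam := by
      by_contra hc
      push_neg at hc
      have : lam = 0 := le_antisymm hc hlam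
      subst this
      have hmc : 0 < m * C := Nat.mul_pos hm (by exact_mod_cast hC0)
      have : Vpois ((m:ℝ)*0) (m*C) = 1 := by
        rw [Vpois]
        rw [Finset.sum_eq_single 0]
        · simp
        · intro k _ hk
          simp [zero_pow hk]
        · intro hk
          exact absurd (Finset.mem_range.mpr (by omega)) hk
      rw [this] at h'
      linarith
    -- apply chernoff_high with μ = m·lam, n = m·C
    have hμ0 : (0:ℝ) < (m:ℝ)*lam := by positivity
    have hμle : (m:ℝ)*lam ≤ ((m*C : ℕ) : ℝ) := by
      push_cast
      nlinarith
    have hch := chernoff_high ((m:ℝ)*lam) (m*C) hμ0 hμle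
    have hlog : Real.log ε < ((m*C:ℕ):ℝ) * Real.log ((m:ℝ)*lam / ((m*C:ℕ):ℝ)) + ((m*C:ℕ):ℝ) - (m:ℝ)*lam := by
      rw [Real.log_lt_iff_lt_exp hε]
      exact lt_of_lt_of_le h' hch
    set μ : ℝ := (m:ℝ)*lam with hμdef
    set nn : ℝ := ((m*C:ℕ):ℝ) with hnn
    have hnnpos : 0 < nn := by rw [hnn]; push_cast; positivity
    have hrr : 0 < μ / nn := div_pos hμ0 hnnpos
    have hrle : μ / nn ≤ 1 := (div_le_one hnnpos).mpr hμle
    have hF := logF' (μ/nn) hrr hrle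
    -- multiply by nn
    have hFn : nn * Real.log (μ/nn) + nn - μ ≤ -((nn - μ)^2 / (2*nn)) := by
      have := mul_le_mul_of_nonneg_left hF (le_of_lt hnnpos)
      have hexp : nn * (1 - μ/nn) = nn - μ := by field_simp
      have hexp2 : nn * ((1 - μ/nn)^2/2) = (nn - μ)^2/(2*nn) := by field_simp
      nlinarith [this]
    have hkey : (nn - μ)^2 / (2*nn) < L := by
      rw [hLeq]; linarith
    -- translate : nn = m C, μ = m lam
    have hCml : ((C:ℝ) - lam)^2 < 2*(C:ℝ)*L/(m:ℝ) := by
      have hnc : nn = (m:ℝ)*(C:ℝ) := by rw [hnn]; push_cast; ring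
      rw [hnc, hμdef] at hkey
      rw [div_lt_iff₀ (by positivity)] at hkey
      rw [lt_div_iff₀ hm0]
      have h2 : (m:ℝ) * (((C:ℝ)-lam)^2 * m) < (m:ℝ) * (2*(C:ℝ)*L) := by linear_combination hkey
      exact (mul_lt_mul_iff_right₀ hm0).mp h2
    constructor
    · have hs2 : Real.sqrt (2*(C:ℝ)*L/(m:ℝ))^2 = 2*(C:ℝ)*L/(m:ℝ) :=
        Real.sq_sqrt (by positivity)
      have h1 : (C:ℝ) - lam ≤ Real.sqrt (2*(C:ℝ)*L/(m:ℝ)) := by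
        nlinarith [hsqnn, hCml, hs2]
      linarith
    · have : 0 ≤ 4 * L / (m:ℝ) := by positivity
      linarith
  · -- case λ ≥ C : Vdet = 0
    push_neg at hlt
    have hVd : Vdet lam C = 0 := if_neg (not_lt.mpr hlt)
    rw [hVd, sub_zero] at h
    have hV0 : 0 ≤ Vpois ((m:ℝ)*lam) (m*C) := Vpois_nonneg _ hμnn _
    rw [abs_of_nonneg hV0] at h
    have hC1 : 1 ≤ C := by
      by_contra hc
      push_neg at hc
      interval_cases C
      simp [Vpois] at h
      linarith
    have hC0 : (0:ℝ) < C := by exact_mod_cast hC1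
    have hlam0 : 0 < lam := lt_of_lt_of_le hC0 hlt
    have hVle : Vpois ((m:ℝ)*lam) (m*C) ≤ 1 := Vpois_le_one _ hμnn _
    have hε1 : ε < 1 := lt_of_lt_of_le h hVle
    have hLpos : 0 < L := by
      rw [hL, one_div]
      exact Real.log_pos ((one_lt_inv₀ hε).mpr hε1)
    have hn1 : 1 ≤ m * C := Nat.one_le_iff_ne_zero.mpr (by positivity)
    have hnμ : ((m*C:ℕ):ℝ) ≤ (m:ℝ)*lam := by push_cast; nlinarith
    have hch := chernoff_low ((m:ℝ)*lam) (m*C) hn1 hnμ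
    have hlog : Real.log ε < ((m*C:ℕ):ℝ) * Real.log ((m:ℝ)*lam / ((m*C:ℕ):ℝ)) + ((m*C:ℕ):ℝ) - (m:ℝ)*lam := by
      rw [Real.log_lt_iff_lt_exp hε]
      exact lt_of_lt_of_le h hch
    set μ : ℝ := (m:ℝ)*lam with hμdef
    set nn : ℝ := ((m*C:ℕ):ℝ) with hnn
    have hnnpos : 0 < nn := by rw [hnn]; push_cast; positivity
    have hμpos : 0 < μ := by rw [hμdef]; positivity
    have hss : 0 < nn / μ := div_pos hnnpos hμpos
    have hsle : nn / μ ≤ 1 := (div_le_one hμpos).mpr hnμ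
    have hG := logG' (nn/μ) hss hsle
    have hGn : nn * Real.log (μ/nn) + nn - μ ≤ -((μ - nn)^2 / (2*μ)) := by
      have hmul := mul_le_mul_of_nonneg_left hG (le_of_lt hμpos)
      have e1 : μ * (1 - nn/μ) = μ - nn := by field_simp
      have e2 : μ * ((1 - nn/μ)^2/2) = (μ - nn)^2/(2*μ) := by field_simp
      have e3 : μ * ((nn/μ) * Real.log (nn/μ)) = nn * Real.log (nn/μ) := by field_simp
      have e4 : Real.log (nn/μ) = -Real.log (μ/nn) := by
        rw [← Real.log_inv]
        congr 1
        field_simp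
      nlinarith [hmul]
    have hkey : (μ - nn)^2 / (2*μ) < L := by
      rw [hLeq]; linarith
    have hlC : (lam - (C:ℝ))^2 < 2*lam*L/(m:ℝ) := by
      have hnc : nn = (m:ℝ)*(C:ℝ) := by rw [hnn]; push_cast; ring
      rw [hnc, hμdef] at hkey
      rw [div_lt_iff₀ (by positivity)] at hkey
      rw [lt_div_iff₀ hm0]
      have h2 : (m:ℝ) * ((lam - (C:ℝ))^2 * m) < (m:ℝ) * (2*lam*L) := by linear_combination hkey
      exact (mul_lt_mul_iff_right₀ hm0).mp h2
    constructor
    · calc (C:ℝ) - Real.sqrt (2*(C:ℝ)*L/(m:ℝ)) ≤ (C:ℝ) := by linarith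
        _ ≤ lam := hlt
    · set a : ℝ := Real.sqrt (2*(C:ℝ)*L/(m:ℝ)) with ha
      have ha2 : a^2 = 2*(C:ℝ)*L/(m:ℝ) := Real.sq_sqrt (by positivity)
      set b : ℝ := L/(m:ℝ) with hb
      have hbpos : 0 < b := by rw [hb]; positivity
      have ht : (lam - (C:ℝ))^2 < a^2 + 2*b*(lam - (C:ℝ)) := by
        rw [ha2, hb]
        have : 2*lam*L/(m:ℝ) = 2*(C:ℝ)*L/(m:ℝ) + 2*(L/(m:ℝ))*(lam - (C:ℝ)) := by
          field_simp; ring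
        linarith [hlC]
      have hgoal : lam - (C:ℝ) ≤ a + 4*b := by
        nlinarith [sq_nonneg (lam - (C:ℝ) - a - 2*b), hsqnn, hbpos, hlt, hC0]
      have : 4 * L / (m:ℝ) = 4 * b := by rw [hb]; ring
      rw [this]
      linarith
end
end
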